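/- Assume f₁(x) = ∑_{m≥0} b_m x^m converges on [−1,1] with c₂ r^m ≤ b_m ≤ c₁ r^m for all m ≥ 0, where 0 < r < 1 and 0 < c₂ ≤ c₁, and that g(t) = ∑_{q≥0} a_q t^q is a polynomial of degree D ≥ 1 with a_q ≥ 0. Set d* := min(D, n), and for λ > 0 let E^λ be the set of tuples ((k₁,l₁),…,(kₙ,lₙ)) with k_i ∈ ℕ, 1 ≤ l_i ≤ α_{k_i,d}, and μ_{(k₁,…,kₙ)} ≥ λ. Then there exist constants C, C', c, c', λ₀ > 0 such that for all 0 < λ ≤ λ₀ the set E^λ is finite and c·(log(c'/λ))^{(d−1)d*} ≤ |E^λ| ≤ C·(log(C'/λ))^{(d−1)d*}. -/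

import Mathlib

open scoped BigOperators

/-- `powCoef b α m` is the `m`-th Taylor coefficient at `0` of `f₁^α`, where
`f₁(x) = ∑_{m≥0} b m * x^m` (α-fold Cauchy product). -/
def powCoef (b : ℕ → ℝ) (α m : ℕ) : ℝ :=
  ∑ t ∈ Finset.Nat.antidiagonalTuple α m, ∏ i, b (t i)

/-- The surface area of the unit sphere `S^{d-1} ⊆ ℝ^d`, i.e. `2 π^{d/2} / Γ(d/2)`. -/
noncomputable def unitSphereArea (d : ℕ) : ℝ :=
  2 * Real.pi ^ ((d : ℝ) / 2) / Real.Gamma ((d : ℝ) / 2)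

/-- The eigenvalue `λ_{k,α}` associated with the dot-product kernel `f₁^α` on `S^{d-1}`. -/
noncomputable def lamCoef (d : ℕ) (b : ℕ → ℝ) (k α : ℕ) : ℝ :=
  unitSphereArea (d - 1) * Real.Gamma (((d : ℝ) - 1) / 2) / 2 ^ (k + 1) *
    ∑' s : ℕ, powCoef b α (2 * s + k) *
      (((2 * s + k).factorial : ℝ) / ((2 * s).factorial : ℝ)) *
      (Real.Gamma ((s : ℝ) + 1 / 2) / Real.Gamma ((s : ℝ) + (k : ℝ) + (d : ℝ) / 2))

/-- `μ_{(k₁,…,kₙ)} := ∑_{q≥0} a_q ∑_{α₁+⋯+αₙ=q} (q!/(α₁!⋯αₙ!)) ∏_i λ_{k_i,α_i}`. -/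
noncomputable def muCoef (d n : ℕ) (b a : ℕ → ℝ) (k : Fin n → ℕ) : ℝ :=
  ∑' q : ℕ, a q * ∑ t ∈ Finset.Nat.antidiagonalTuple n q,
    (Nat.multinomial Finset.univ t : ℝ) * ∏ i, lamCoef d b (k i) (t i)

/-- `α_{m,d}`, the dimension of the space of degree-`m` spherical harmonics in `d` variables. -/
def alphaDim (d m : ℕ) : ℕ :=
  if m = 0 then 1
  else if m = 1 then d
  else Nat.choose (d + m - 1) m - Nat.choose (d + m - 3) (m - 2)

/-- The set `E^λ` of tuples `((k₁,l₁),…,(kₙ,lₙ))` with `1 ≤ l_i ≤ α_{k_i,d}` and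
`μ_{(k₁,…,kₙ)} ≥ λ`. -/
def eigSet (d n : ℕ) (b a : ℕ → ℝ) (lam : ℝ) : Set ((Fin n → ℕ) × (Fin n → ℕ)) :=
  {p | (∀ i, 1 ≤ p.2 i ∧ p.2 i ≤ alphaDim d (p.1 i)) ∧ lam ≤ muCoef d n b a p.1}



set_option maxHeartbeats 1000000


lemma myGamma_le_one {x : ℝ} (h1 : 1 ≤ x) (h2 : x ≤ 2) : Real.Gamma x ≤ 1 := by
  have hx0 : 0 < x := lt_of_lt_of_le one_pos h1
  have hc := Real.convexOn_log_Gamma.2 (Set.mem_Ioi.2 one_pos) (Set.mem_Ioi.2 two_pos)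
    (show (0:ℝ) ≤ 2 - x by linarith) (show (0:ℝ) ≤ x - 1 by linarith)
    (show (2 - x) + (x - 1) = 1 by ring)
  simp only [smul_eq_mul, Function.comp, Real.Gamma_one, Real.Gamma_two, Real.log_one] at hc
  have hmid : (2 - x) * 1 + (x - 1) * 2 = x := by ring
  rw [hmid] at hc
  have hc' : Real.log (Real.Gamma x) ≤ 0 := by simpa using hc
  have hG : 0 < Real.Gamma x := Real.Gamma_pos_of_pos hx0
  calc Real.Gamma x = Real.exp (Real.log (Real.Gamma x)) := (Real.exp_log hG).symm
    _ ≤ Real.exp 0 := Real.exp_le_exp.2 hc'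
    _ = 1 := Real.exp_zero

lemma myGamma_half_le {x : ℝ} (h1 : 1 ≤ x) (h2 : x ≤ 2) : (1/2 : ℝ) ≤ Real.Gamma x := by
  have hx0 : 0 < x := lt_of_lt_of_le one_pos h1
  have h4x : Real.Gamma (4 - x) ≤ 2 := by
    have h3 : (4 : ℝ) - x = (3 - x) + 1 := by ring
    have hne : (3 : ℝ) - x ≠ 0 := by intro h; nlinarith
    rw [h3, Real.Gamma_add_one hne]
    have := myGamma_le_one (x := 3 - x) (by linarith) (by linarith)
    nlinarith [Real.Gamma_pos_of_pos (show (0:ℝ) < 3 - x by linarith)]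
  have hc := Real.convexOn_log_Gamma.2 (Set.mem_Ioi.2 hx0)
    (Set.mem_Ioi.2 (show (0:ℝ) < 4 - x by linarith))
    (show (0:ℝ) ≤ 1/2 by norm_num) (show (0:ℝ) ≤ 1/2 by norm_num)
    (show (1/2 : ℝ) + 1/2 = 1 by norm_num)
  simp only [smul_eq_mul, Function.comp] at hc
  have hmid : (1/2) * x + (1/2) * (4 - x) = (2:ℝ) := by ring
  rw [hmid] at hc
  rw [Real.Gamma_two, Real.log_one] at hc
  have hGx : 0 < Real.Gamma x := Real.Gamma_pos_of_pos hx0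
  have hG4 : 0 < Real.Gamma (4 - x) := Real.Gamma_pos_of_pos (by linarith)
  have hlog4 : Real.log (Real.Gamma (4 - x)) ≤ Real.log 2 := Real.log_le_log hG4 h4x
  have hge : -Real.log 2 ≤ Real.log (Real.Gamma x) := by linarith
  calc (1/2 : ℝ) = Real.exp (-Real.log 2) := by
        rw [Real.exp_neg, Real.exp_log two_pos]; norm_num
    _ ≤ Real.exp (Real.log (Real.Gamma x)) := Real.exp_le_exp.2 hge
    _ = Real.Gamma x := Real.exp_log hGx

/-- Γ(x) ≥ 1/2 for all x ≥ 1. -/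
lemma myGamma_half_le' {x : ℝ} (h1 : 1 ≤ x) : (1/2 : ℝ) ≤ Real.Gamma x := by
  obtain ⟨m, y, hy1, hy2, rfl⟩ : ∃ (m : ℕ) (y : ℝ), 1 ≤ y ∧ y ≤ 2 ∧ x = y + m := by
    rcases le_or_gt x 2 with h | h
    · exact ⟨0, x, h1, h, by simp⟩
    · have hfl : 1 ≤ ⌊x⌋₊ := Nat.le_floor (by exact_mod_cast h1)
      have hcast : ((⌊x⌋₊ - 1 : ℕ) : ℝ) = (⌊x⌋₊ : ℝ) - 1 := by
        push_cast [Nat.cast_sub hfl]; ring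
      refine ⟨⌊x⌋₊ - 1, x - (⌊x⌋₊ - 1 : ℕ), ?_, ?_, by ring⟩
      · rw [hcast]
        have := Nat.floor_le (le_trans zero_le_one h1)
        linarith
      · rw [hcast]
        have := Nat.lt_floor_add_one x
        linarith
  induction m with
  | zero => simpa using myGamma_half_le hy1 hy2
  | succ m ih =>
    have hym : (0:ℝ) < y + m := by positivity
    have hstep : y + ((m:ℕ)+1 : ℕ) = (y + m) + 1 := by push_cast; ring
    rw [hstep, Real.Gamma_add_one (ne_of_gt hym)]
    nlinarith [ih (by nlinarith [Nat.cast_nonneg (α := ℝ) m] : (1:ℝ) ≤ y + m), Real.Gamma_pos_of_pos hym,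
      (show (1:ℝ) ≤ y + m by linarith [Nat.cast_nonneg (α := ℝ) m])]

/-- Γ(x+m) ≥ m!/2 for x ≥ 1. -/
lemma myGamma_fact_le {x : ℝ} (h1 : 1 ≤ x) (m : ℕ) :
    (m.factorial : ℝ) / 2 ≤ Real.Gamma (x + m) := by
  induction m with
  | zero => simpa using myGamma_half_le' h1
  | succ m ih =>
    have hym : (0:ℝ) < x + m := by positivity
    have hstep : x + ((m:ℕ)+1 : ℕ) = (x + m) + 1 := by push_cast; ring
    rw [hstep, Real.Gamma_add_one (ne_of_gt hym)]
    have h1m : (1:ℝ) + m ≤ x + m := by linarith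
    have hfac : (Nat.factorial (m+1) : ℝ) = (m+1) * m.factorial := by
      push_cast [Nat.factorial_succ]; ring
    rw [hfac]
    have hGpos : 0 < Real.Gamma (x + m) := Real.Gamma_pos_of_pos hym
    calc ((m:ℝ)+1) * m.factorial / 2 = ((m:ℝ)+1) * (m.factorial / 2) := by ring
      _ ≤ (x + m) * Real.Gamma (x + m) := by
          apply mul_le_mul (by linarith) ih (by positivity) (by linarith)

/-- Γ(s + 1/2) ≤ 2 s!. -/
lemma myGamma_half_upper (s : ℕ) : Real.Gamma ((s:ℝ) + 1/2) ≤ 2 * s.factorial := by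
  induction s with
  | zero =>
    simp only [Nat.cast_zero, zero_add, Nat.factorial_zero, Nat.cast_one, mul_one]
    rw [Real.Gamma_one_half_eq]
    calc Real.sqrt Real.pi ≤ Real.sqrt 4 := Real.sqrt_le_sqrt (by linarith [Real.pi_le_four])
      _ = 2 := by rw [show (4:ℝ) = 2^2 by norm_num, Real.sqrt_sq (by norm_num)]
  | succ s ih =>
    have hne : (s:ℝ) + 1/2 ≠ 0 := by positivity
    have hstep : ((s+1 : ℕ):ℝ) + 1/2 = ((s:ℝ) + 1/2) + 1 := by push_cast; ring
    rw [hstep, Real.Gamma_add_one hne]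
    have hfac : (Nat.factorial (s+1) : ℝ) = (s+1) * s.factorial := by
      push_cast [Nat.factorial_succ]; ring
    rw [hfac]
    have hGpos : 0 < Real.Gamma ((s:ℝ) + 1/2) := Real.Gamma_pos_of_pos (by positivity)
    calc ((s:ℝ) + 1/2) * Real.Gamma ((s:ℝ)+1/2) ≤ ((s:ℝ)+1) * (2 * s.factorial) := by
          apply mul_le_mul (by linarith) ih (le_of_lt hGpos) (by positivity)
      _ = 2 * ((s:ℝ)+1) * s.factorial := by ring
      _ = 2 * (((s:ℝ)+1) * s.factorial) := by ring


/-- `(2s+k)! * s! ≤ 2^k * (s+k)! * (2s)!`. -/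
lemma fact_ratio (s : ℕ) : ∀ k : ℕ,
    (2*s+k).factorial * s.factorial ≤ 2^k * (s+k).factorial * (2*s).factorial := by
  intro k
  induction k with
  | zero => simp [Nat.mul_comm]
  | succ k ih =>
    have h1 : (2*s+(k+1)).factorial = (2*s+k+1) * (2*s+k).factorial := by
      rw [show 2*s+(k+1) = (2*s+k)+1 by ring, Nat.factorial_succ]
    have h2 : (s+(k+1)).factorial = (s+k+1) * (s+k).factorial := by
      rw [show s+(k+1) = (s+k)+1 by ring, Nat.factorial_succ]
    calc (2*s+(k+1)).factorial * s.factorial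
        = (2*s+k+1) * ((2*s+k).factorial * s.factorial) := by rw [h1]; ring
      _ ≤ (2*s+k+1) * (2^k * (s+k).factorial * (2*s).factorial) :=
          Nat.mul_le_mul_left _ ih
      _ ≤ (2*(s+k+1)) * (2^k * (s+k).factorial * (2*s).factorial) := by
          apply Nat.mul_le_mul_right; omega
      _ = 2^(k+1) * ((s+k+1) * (s+k).factorial) * (2*s).factorial := by ring
      _ = 2^(k+1) * (s+(k+1)).factorial * (2*s).factorial := by rw [h2]

/-- `(k+d)! ≤ k! * (k+d)^d`. -/
lemma fact_add_le (k : ℕ) : ∀ d : ℕ, (k+d).factorial ≤ k.factorial * (k+d)^d := by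
  intro d
  induction d with
  | zero => simp
  | succ d ih =>
    calc (k+(d+1)).factorial = (k+d+1) * (k+d).factorial := by
          rw [show k+(d+1) = (k+d)+1 by ring, Nat.factorial_succ]
      _ ≤ (k+d+1) * (k.factorial * (k+d)^d) := Nat.mul_le_mul_left _ ih
      _ ≤ (k+d+1) * (k.factorial * (k+d+1)^d) := by
          apply Nat.mul_le_mul_left
          exact Nat.mul_le_mul_left _ (Nat.pow_le_pow_left (by omega) _)
      _ = k.factorial * (k+(d+1))^(d+1) := by
          rw [pow_succ]; ring_nf
      
/-- `(K+1)^j ≤ (K+j).descFactorial j`. -/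
lemma pow_le_descFactorial (K : ℕ) : ∀ j : ℕ, (K+1)^j ≤ (K+j).descFactorial j := by
  intro j
  induction j with
  | zero => simp
  | succ j ih =>
    rw [Nat.descFactorial_succ]
    have h1 : K + (j+1) - j = K + 1 := by omega
    rw [h1, pow_succ]
    have h2 : (K+j).descFactorial j ≤ (K+(j+1)).descFactorial j :=
      Nat.descFactorial_le _ (by omega)
    calc (K+1)^j * (K+1) = (K+1) * (K+1)^j := by ring
      _ ≤ (K+1) * (K+(j+1)).descFactorial j :=
          Nat.mul_le_mul_left _ (le_trans ih h2)

/-- `(K+1)^(d-1) ≤ C(K+d-1, d-1) * (d-1)!`. -/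
lemma pow_le_choose_mul_fact (K j : ℕ) :
    (K+1)^j ≤ (K+j).choose j * j.factorial := by
  have := pow_le_descFactorial K j
  rwa [Nat.descFactorial_eq_factorial_mul_choose, Nat.mul_comm] at this


lemma alphaDim_zero (d : ℕ) : alphaDim d 0 = 1 := rfl

lemma alphaDim_eq {d m : ℕ} (hd : 2 ≤ d) (hm : 2 ≤ m) :
    alphaDim d m = Nat.choose (d + m - 2) m + Nat.choose (d + m - 3) (m - 1) := by
  obtain ⟨e, rfl⟩ : ∃ e, d = e + 2 := ⟨d - 2, by omega⟩
  obtain ⟨j, rfl⟩ : ∃ j, m = j + 2 := ⟨m - 2, by omega⟩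
  have h1 : e + 2 + (j + 2) - 1 = (e + j + 2) + 1 := by omega
  have h2 : e + 2 + (j + 2) - 3 = e + j + 1 := by omega
  have h3 : e + 2 + (j + 2) - 2 = e + j + 2 := by omega
  have h4 : j + 2 - 2 = j := by omega
  have h5 : j + 2 - 1 = j + 1 := by omega
  unfold alphaDim
  rw [if_neg (by omega), if_neg (by omega), h1, h2, h3, h4, h5]
  have p1 : ((e+j+2)+1).choose (j+2) = (e+j+2).choose (j+1) + (e+j+2).choose (j+2) :=
    Nat.choose_succ_succ' (e+j+2) (j+1)
  have p2 : (e+j+2).choose (j+1) = (e+j+1).choose j + (e+j+1).choose (j+1) := by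
    rw [show e+j+2 = (e+j+1)+1 by omega]
    exact Nat.choose_succ_succ' (e+j+1) j
  omega

lemma alphaDim_pos {d : ℕ} (hd : 2 ≤ d) (m : ℕ) : 1 ≤ alphaDim d m := by
  rcases Nat.lt_or_ge m 2 with hm | hm
  · interval_cases m
    · exact le_refl _
    · show 1 ≤ if (1:ℕ) = 0 then 1 else if (1:ℕ) = 1 then d else _
      rw [if_neg one_ne_zero, if_pos rfl]; omega
  · rw [alphaDim_eq hd hm]
    have : 0 < (d + m - 3).choose (m-1) := Nat.choose_pos (by omega)
    omega

lemma choose_flip {a b : ℕ} (h : b ≤ a) : (a).choose b = (a).choose (a - b) :=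
  (Nat.choose_symm h).symm

lemma alphaDim_le {d : ℕ} (hd : 2 ≤ d) (m : ℕ) : alphaDim d m ≤ 2 * (d + m)^(d-2) := by
  have hpow : 1 ≤ (d+m)^(d-2) := Nat.one_le_pow _ _ (by omega)
  rcases Nat.lt_or_ge m 2 with hm | hm
  · interval_cases m
    · rw [alphaDim_zero]; omega
    · have : alphaDim d 1 = d := by
        show (if (1:ℕ) = 0 then 1 else if (1:ℕ) = 1 then d else _) = d
        rw [if_neg one_ne_zero, if_pos rfl]
      rw [this]
      rcases Nat.eq_or_lt_of_le hd with h | h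
      · subst h; norm_num
      · have h1 : d + 1 ≤ (d+1)^(d-2) := Nat.le_self_pow (by omega) _
        omega
  · rw [alphaDim_eq hd hm]
    have e1 : (d + m - 2).choose m ≤ (d+m)^(d-2) := by
      rw [choose_flip (by omega), show d + m - 2 - m = d - 2 by omega]
      calc (d+m-2).choose (d-2) ≤ (d+m-2)^(d-2) := Nat.choose_le_pow _ _
        _ ≤ (d+m)^(d-2) := Nat.pow_le_pow_left (by omega) _
    have e2 : (d + m - 3).choose (m-1) ≤ (d+m)^(d-2) := by
      rw [choose_flip (by omega), show d + m - 3 - (m-1) = d - 2 by omega]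
      calc (d+m-3).choose (d-2) ≤ (d+m-3)^(d-2) := Nat.choose_le_pow _ _
        _ ≤ (d+m)^(d-2) := Nat.pow_le_pow_left (by omega) _
    omega

lemma alphaDim_ge {d : ℕ} (hd : 2 ≤ d) (m : ℕ) : (m + d - 2).choose (d-2) ≤ alphaDim d m := by
  rcases Nat.lt_or_ge m 2 with hm | hm
  · interval_cases m
    · rw [show 0 + d - 2 = d - 2 by omega, Nat.choose_self, alphaDim_zero]
    · rw [show 1 + d - 2 = d - 1 by omega]
      have h1 : (d-1).choose (d-2) = d - 1 := by
        rw [choose_flip (by omega), show d - 1 - (d-2) = 1 by omega, Nat.choose_one_right]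
      have h2 : alphaDim d 1 = d := by
        show (if (1:ℕ) = 0 then 1 else if (1:ℕ) = 1 then d else _) = d
        rw [if_neg one_ne_zero, if_pos rfl]
      omega
  · rw [alphaDim_eq hd hm]
    have e1 : (m + d - 2).choose (d - 2) = (d + m - 2).choose m := by
      rw [show m + d - 2 = d + m - 2 by omega, choose_flip (show d - 2 ≤ d + m - 2 by omega),
        show d + m - 2 - (d - 2) = m by omega]
    omega

/-- Hockey stick: `∑_{k=0}^{K} C(k+j, j) = C(K+j+1, j+1)`. -/
lemma sum_choose_shift (K j : ℕ) :
    ∑ k ∈ Finset.range (K+1), (k + j).choose j = (K + j + 1).choose (j+1) := by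
  have h := Nat.sum_Icc_choose (K + j) j
  rw [← h]
  apply Finset.sum_nbij' (i := fun k => k + j) (j := fun i => i - j)
  · intro a ha
    simp only [Finset.mem_range] at ha
    simp only [Finset.mem_Icc]
    omega
  · intro a ha
    simp only [Finset.mem_Icc] at ha
    simp only [Finset.mem_range]
    omega
  · intro a ha; omega
  · intro a ha
    simp only [Finset.mem_Icc] at ha
    omega
  · intro a ha
    rfl

lemma sum_alphaDim_ge {d : ℕ} (hd : 2 ≤ d) (K : ℕ) :
    (K + d - 1).choose (d-1) ≤ ∑ k ∈ Finset.range (K+1), alphaDim d k := by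
  calc (K + d - 1).choose (d-1) = (K + (d-2) + 1).choose ((d-2)+1) := by
        congr 1 <;> omega
    _ = ∑ k ∈ Finset.range (K+1), (k + (d-2)).choose (d-2) := (sum_choose_shift K (d-2)).symm
    _ ≤ ∑ k ∈ Finset.range (K+1), alphaDim d k := by
        apply Finset.sum_le_sum
        intro k _
        have := alphaDim_ge hd k
        rwa [show k + d - 2 = k + (d-2) by omega] at this

lemma sum_alphaDim_le {d : ℕ} (hd : 2 ≤ d) (K : ℕ) :
    ∑ k ∈ Finset.range (K+1), alphaDim d k ≤ 2 * d^(d-2) * (K+1)^(d-1) := by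
  calc ∑ k ∈ Finset.range (K+1), alphaDim d k ≤ ∑ _k ∈ Finset.range (K+1), 2 * (d + K)^(d-2) := by
        apply Finset.sum_le_sum
        intro k hk
        simp only [Finset.mem_range] at hk
        exact le_trans (alphaDim_le hd k) (by
          apply Nat.mul_le_mul_left
          exact Nat.pow_le_pow_left (by omega) _)
    _ = (K+1) * (2 * (d+K)^(d-2)) := by rw [Finset.sum_const, Finset.card_range]; ring
    _ ≤ (K+1) * (2 * (d*(K+1))^(d-2)) := by
        apply Nat.mul_le_mul_left
        apply Nat.mul_le_mul_left
        exact Nat.pow_le_pow_left (by nlinarith) _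
    _ = 2 * d^(d-2) * ((K+1)^(d-2) * (K+1)) := by rw [Nat.mul_pow]; ring
    _ = 2 * d^(d-2) * (K+1)^(d-1) := by
        rw [← pow_succ, show d - 2 + 1 = d - 1 by omega]


section powCoef
variable {b : ℕ → ℝ} {r c₁ c₂ : ℝ}

lemma powCoef_nonneg (hb : ∀ m, 0 ≤ b m) (α m : ℕ) : 0 ≤ powCoef b α m :=
  Finset.sum_nonneg fun t _ => Finset.prod_nonneg fun i _ => hb _

lemma powCoef_zero_eq (b : ℕ → ℝ) (m : ℕ) :
    powCoef b 0 m = if m = 0 then 1 else 0 := by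
  cases m with
  | zero => simp [powCoef]
  | succ m => simp [powCoef]

lemma prod_b_le (hr0 : 0 < r) (hb : ∀ m, b m ≤ c₁ * r^m) (hb0 : ∀ m, 0 ≤ b m)
    {α m : ℕ} {t : Fin α → ℕ} (ht : ∑ i, t i = m) :
    ∏ i, b (t i) ≤ c₁^α * r^m := by
  have hc1 : 0 ≤ c₁ := by
    have := le_trans (hb0 0) (hb 0); nlinarith [pow_pos hr0 0]
  calc ∏ i, b (t i) ≤ ∏ i : Fin α, c₁ * r^(t i) :=
        Finset.prod_le_prod (fun i _ => hb0 _) (fun i _ => hb _)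
    _ = c₁^α * ∏ i : Fin α, r^(t i) := by
        rw [Finset.prod_mul_distrib, Finset.prod_const, Finset.card_univ, Fintype.card_fin]
    _ = c₁^α * r^m := by rw [Finset.prod_pow_eq_pow_sum, ht]

lemma prod_b_ge (hr0 : 0 < r) (hb : ∀ m, c₂ * r^m ≤ b m) (hc2 : 0 ≤ c₂)
    {α m : ℕ} {t : Fin α → ℕ} (ht : ∑ i, t i = m) :
    c₂^α * r^m ≤ ∏ i, b (t i) := by
  calc c₂^α * r^m = ∏ i : Fin α, c₂ * r^(t i) := by
        rw [Finset.prod_mul_distrib, Finset.prod_const, Finset.card_univ, Fintype.card_fin,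
          Finset.prod_pow_eq_pow_sum, ht]
    _ ≤ ∏ i, b (t i) :=
        Finset.prod_le_prod (fun i _ => by positivity) (fun i _ => hb _)

lemma card_antidiagonalTuple_le (α m : ℕ) :
    (Finset.Nat.antidiagonalTuple α m).card ≤ (m+1)^α := by
  have hsub : Finset.Nat.antidiagonalTuple α m ⊆
      Fintype.piFinset (fun _ : Fin α => Finset.range (m+1)) := by
    intro t ht
    rw [Finset.Nat.mem_antidiagonalTuple] at ht
    rw [Fintype.mem_piFinset]
    intro i
    rw [Finset.mem_range]
    have : t i ≤ ∑ j, t j := Finset.single_le_sum (fun j _ => Nat.zero_le _) (Finset.mem_univ i)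
    omega
  calc (Finset.Nat.antidiagonalTuple α m).card
      ≤ (Fintype.piFinset (fun _ : Fin α => Finset.range (m+1))).card :=
        Finset.card_le_card hsub
    _ = (m+1)^α := by
        rw [Fintype.card_piFinset]
        simp

lemma powCoef_le (hr0 : 0 < r) (hb : ∀ m, b m ≤ c₁ * r^m) (hb0 : ∀ m, 0 ≤ b m)
    (α m : ℕ) : powCoef b α m ≤ ((m:ℝ)+1)^α * (c₁^α * r^m) := by
  have hc1 : 0 ≤ c₁ := by
    have := le_trans (hb0 0) (hb 0); nlinarith [pow_pos hr0 0]
  have hB : (0:ℝ) ≤ c₁^α * r^m := by positivity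
  calc powCoef b α m ≤ (Finset.Nat.antidiagonalTuple α m).card • (c₁^α * r^m) :=
        Finset.sum_le_card_nsmul _ _ _ (fun t ht =>
          prod_b_le hr0 hb hb0 (Finset.Nat.mem_antidiagonalTuple.mp ht))
    _ = ((Finset.Nat.antidiagonalTuple α m).card : ℝ) * (c₁^α * r^m) := by
        rw [nsmul_eq_mul]
    _ ≤ ((m:ℝ)+1)^α * (c₁^α * r^m) := by
        apply mul_le_mul_of_nonneg_right _ hB
        have := card_antidiagonalTuple_le α m
        calc ((Finset.Nat.antidiagonalTuple α m).card : ℝ) ≤ (((m+1)^α : ℕ) : ℝ) := by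
              exact_mod_cast this
          _ = ((m:ℝ)+1)^α := by push_cast; ring

lemma powCoef_ge (hr0 : 0 < r) (hb : ∀ m, c₂ * r^m ≤ b m) (hc2 : 0 ≤ c₂) (hb0 : ∀ m, 0 ≤ b m)
    {α : ℕ} (hα : 1 ≤ α) (m : ℕ) : c₂^α * r^m ≤ powCoef b α m := by
  have h0 : 0 < α := hα
  set i0 : Fin α := ⟨0, h0⟩
  set t0 : Fin α → ℕ := fun j => if j = i0 then m else 0 with ht0
  have hsum : ∑ i, t0 i = m := by
    rw [ht0, Finset.sum_ite_eq' Finset.univ i0 (fun _ => m)]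
    simp
  have hmem : t0 ∈ Finset.Nat.antidiagonalTuple α m :=
    Finset.Nat.mem_antidiagonalTuple.mpr hsum
  calc c₂^α * r^m ≤ ∏ i, b (t0 i) := prod_b_ge hr0 hb hc2 hsum
    _ ≤ powCoef b α m :=
        Finset.single_le_sum (f := fun t => ∏ i, b (t i))
          (fun t _ => Finset.prod_nonneg fun i _ => hb0 _) hmem

end powCoef

noncomputable def lamTerm (d : ℕ) (b : ℕ → ℝ) (k α : ℕ) (s : ℕ) : ℝ :=
  powCoef b α (2 * s + k) *
    (((2 * s + k).factorial : ℝ) / ((2 * s).factorial : ℝ)) *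
    (Real.Gamma ((s : ℝ) + 1 / 2) / Real.Gamma ((s : ℝ) + (k : ℝ) + (d : ℝ) / 2))

lemma lamCoef_eq (d : ℕ) (b : ℕ → ℝ) (k α : ℕ) :
    lamCoef d b k α = unitSphereArea (d - 1) * Real.Gamma (((d : ℝ) - 1) / 2) / 2 ^ (k + 1) *
      ∑' s : ℕ, lamTerm d b k α s := rfl

/-- Sup bound for polynomially-growing times geometric sequences. -/
lemma exists_poly_geom_bound (e : ℕ) {x : ℝ} (hx0 : 0 < x) (hx1 : x < 1) :
    ∃ M : ℝ, 0 < M ∧ ∀ m : ℕ, ((m:ℝ)+1)^e * x^m ≤ M := by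
  have hs : Summable (fun n : ℕ => (n:ℝ)^e * x^n) :=
    summable_pow_mul_geometric_of_norm_lt_one (R := ℝ) e
      (r := x) (by rw [Real.norm_eq_abs, abs_of_pos hx0]; exact hx1)
  have hs1 : Summable (fun m : ℕ => ((m+1:ℕ):ℝ)^e * x^(m+1)) :=
    (summable_nat_add_iff 1).mpr hs
  have hs2 : Summable (fun m : ℕ => ((m:ℝ)+1)^e * x^m) := by
    have h := hs1.mul_left (x⁻¹)
    refine h.congr (fun m => ?_)
    push_cast
    rw [pow_succ]
    field_simp
  refine ⟨max 1 (∑' m : ℕ, ((m:ℝ)+1)^e * x^m), lt_of_lt_of_le one_pos (le_max_left _ _), ?_⟩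
  intro m
  refine le_trans ?_ (le_max_right _ _)
  exact hs2.le_tsum m (fun j _ => by positivity)

lemma myGamma_nat_half_upper {d : ℕ} (hd : 2 ≤ d) (k : ℕ) :
    Real.Gamma ((k:ℝ) + (d:ℝ)/2) ≤ ((k+d).factorial : ℝ) := by
  rcases Nat.even_or_odd d with ⟨e, he⟩ | ⟨e, he⟩
  · have he1 : 1 ≤ e := by omega
    have harg : (k:ℝ) + (d:ℝ)/2 = ((k+e-1 : ℕ):ℝ) + 1 := by
      subst he
      have h2 : ((k+e-1 : ℕ):ℝ) = (k:ℝ) + (e:ℝ) - 1 := by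
        push_cast [Nat.cast_sub (show 1 ≤ k + e by omega)]
        ring
      rw [h2]
      push_cast
      ring
    rw [harg, Real.Gamma_nat_eq_factorial]
    exact_mod_cast Nat.factorial_le (by omega)
  · have he1 : 1 ≤ e := by omega
    have harg : (k:ℝ) + (d:ℝ)/2 = ((k+e : ℕ):ℝ) + 1/2 := by
      subst he; push_cast; ring
    rw [harg]
    refine le_trans (myGamma_half_upper (k+e)) ?_
    have h1 : 2 * (k+e).factorial ≤ (k+e+1).factorial := by
      rw [Nat.factorial_succ]
      exact Nat.mul_le_mul_right _ (by omega)
    have h2 : (k+e+1).factorial ≤ (k+d).factorial := Nat.factorial_le (by omega)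
    exact_mod_cast le_trans h1 h2

section lam

variable {d : ℕ} {b : ℕ → ℝ} {r c₁ c₂ : ℝ}

lemma lam_package (hd : 2 ≤ d) (hr0 : 0 < r) (hr1 : r < 1) (hc2 : 0 < c₂) (hcc : c₂ ≤ c₁)
    (hb : ∀ m, c₂ * r ^ m ≤ b m ∧ b m ≤ c₁ * r ^ m) (D : ℕ) :
    ∃ Λ μ₀ : ℝ, 0 < Λ ∧ 0 < μ₀ ∧
      (∀ k α, α ≤ D → 0 ≤ lamCoef d b k α) ∧
      (∀ k α, α ≤ D → lamCoef d b k α ≤ Λ * (Real.sqrt r)^k) ∧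
      (∀ k α, 1 ≤ α → α ≤ D → μ₀ * (r/4)^k ≤ lamCoef d b k α) ∧
      (μ₀ ≤ lamCoef d b 0 0) ∧
      (∀ k, 1 ≤ k → lamCoef d b k 0 = 0) := by
  have hb0 : ∀ m, 0 ≤ b m := fun m => le_trans (by positivity) (hb m).1
  have hc1 : 0 < c₁ := lt_of_lt_of_le hc2 hcc
  set x := Real.sqrt r with hxdef
  have hx0 : 0 < x := Real.sqrt_pos.2 hr0
  have hx1 : x < 1 := by
    rw [hxdef, show (1:ℝ) = Real.sqrt 1 by rw [Real.sqrt_one]]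
    exact Real.sqrt_lt_sqrt (le_of_lt hr0) hr1
  have hxx : x^2 = r := Real.sq_sqrt (le_of_lt hr0)
  set cmax := max c₁ 1 with hcmax
  have hcmax1 : (1:ℝ) ≤ cmax := le_max_right _ _
  obtain ⟨M, hM0, hM⟩ := exists_poly_geom_bound D hx0 hx1
  obtain ⟨M₂, hM₂0, hM₂⟩ := exists_poly_geom_bound d (x := 1/2) (by norm_num) (by norm_num)
  set P := unitSphereArea (d - 1) * Real.Gamma (((d : ℝ) - 1) / 2) with hPdef
  have hdR : (2:ℝ) ≤ (d:ℝ) := by exact_mod_cast hd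
  have hP : 0 < P := by
    have hd1 : (1:ℝ) ≤ ((d-1 : ℕ):ℝ) := by exact_mod_cast (show 1 ≤ d - 1 by omega)
    have h1 : 0 < Real.pi ^ (((d-1 : ℕ) : ℝ) / 2) := Real.rpow_pos_of_pos Real.pi_pos _
    have h2 : 0 < Real.Gamma (((d-1 : ℕ) : ℝ) / 2) := Real.Gamma_pos_of_pos (by linarith)
    have h3 : 0 < unitSphereArea (d - 1) := by
      unfold unitSphereArea
      positivity
    have h4 : 0 < Real.Gamma (((d : ℝ) - 1) / 2) := Real.Gamma_pos_of_pos (by linarith)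
    exact mul_pos h3 h4
  have hGnumpos : ∀ s : ℕ, 0 < Real.Gamma ((s:ℝ) + 1/2) :=
    fun s => Real.Gamma_pos_of_pos (by positivity)
  have hGdenpos : ∀ s k : ℕ, 0 < Real.Gamma ((s:ℝ) + (k:ℝ) + (d:ℝ)/2) := by
    intro s k
    apply Real.Gamma_pos_of_pos
    positivity
  have hd2 : (1:ℝ) ≤ (d:ℝ)/2 := by linarith
  have hGdenpos0 : ∀ k : ℕ, 0 < Real.Gamma ((0:ℝ)+(k:ℝ)+(d:ℝ)/2) := by
    intro k
    have h := hGdenpos 0 k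
    rwa [Nat.cast_zero] at h
  have hGden : ∀ s k : ℕ, ((s+k).factorial : ℝ)/2 ≤ Real.Gamma ((s:ℝ) + (k:ℝ) + (d:ℝ)/2) := by
    intro s k
    have h := myGamma_fact_le hd2 (s+k)
    have harg : (d:ℝ)/2 + ((s+k:ℕ):ℝ) = (s:ℝ) + (k:ℝ) + (d:ℝ)/2 := by push_cast; ring
    rwa [harg] at h
  have hTnn : ∀ k α s, 0 ≤ lamTerm d b k α s := by
    intro k α s
    unfold lamTerm
    have h1 := powCoef_nonneg hb0 α (2*s+k)
    have h2 : (0:ℝ) ≤ ((2*s+k).factorial : ℝ) / ((2*s).factorial : ℝ) := by positivity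
    have h3 : (0:ℝ) ≤ Real.Gamma ((s:ℝ)+1/2) / Real.Gamma ((s:ℝ)+(k:ℝ)+(d:ℝ)/2) :=
      le_of_lt (div_pos (hGnumpos s) (hGdenpos s k))
    positivity
  set Cup := 4 * cmax^D * M with hCup
  have hCup0 : 0 < Cup := by positivity
  -- term upper bound
  have hTub : ∀ k α, α ≤ D → ∀ s, lamTerm d b k α s ≤ Cup * (2*x)^k * r^s := by
    intro k α hα s
    have hsf : (0:ℝ) < (s.factorial : ℝ) := by exact_mod_cast s.factorial_pos
    have hskf : (0:ℝ) < ((s+k).factorial : ℝ) := by exact_mod_cast (s+k).factorial_pos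
    have h2sf : (0:ℝ) < ((2*s).factorial : ℝ) := by exact_mod_cast (2*s).factorial_pos
    have hfr : ((2*s+k).factorial : ℝ) / ((2*s).factorial : ℝ)
        ≤ 2^k * ((s+k).factorial : ℝ) / (s.factorial : ℝ) := by
      rw [div_le_div_iff₀ h2sf hsf]
      have h := fact_ratio s k
      calc ((2*s+k).factorial : ℝ) * (s.factorial : ℝ)
          = (((2*s+k).factorial * s.factorial : ℕ) : ℝ) := by push_cast; ring
        _ ≤ ((2^k * (s+k).factorial * (2*s).factorial : ℕ) : ℝ) := by exact_mod_cast h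
        _ = 2^k * ((s+k).factorial : ℝ) * ((2*s).factorial : ℝ) := by push_cast; ring
    have hgr : Real.Gamma ((s:ℝ)+1/2) / Real.Gamma ((s:ℝ)+(k:ℝ)+(d:ℝ)/2)
        ≤ (2 * (s.factorial : ℝ)) / (((s+k).factorial : ℝ)/2) :=
      div_le_div₀ (by positivity) (myGamma_half_upper s) (by positivity) (hGden s k)
    have hpc : powCoef b α (2*s+k) ≤ cmax^D * ((((2*s+k):ℕ):ℝ)+1)^D * r^(2*s+k) := by
      have h1 := powCoef_le hr0 (fun m => (hb m).2) hb0 α (2*s+k)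
      have h2 : ((((2*s+k):ℕ):ℝ)+1)^α ≤ ((((2*s+k):ℕ):ℝ)+1)^D :=
        pow_le_pow_right₀ (by linarith [Nat.cast_nonneg (α := ℝ) (2*s+k)]) hα
      have h3 : c₁^α ≤ cmax^D :=
        le_trans (pow_le_pow_left₀ (le_of_lt hc1) (le_max_left _ _) α)
          (pow_le_pow_right₀ hcmax1 hα)
      calc powCoef b α (2*s+k) ≤ ((((2*s+k):ℕ):ℝ)+1)^α * (c₁^α * r^(2*s+k)) := h1
        _ ≤ ((((2*s+k):ℕ):ℝ)+1)^D * (cmax^D * r^(2*s+k)) := by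
            apply mul_le_mul h2 (mul_le_mul_of_nonneg_right h3 (by positivity))
              (by positivity) (by positivity)
        _ = cmax^D * ((((2*s+k):ℕ):ℝ)+1)^D * r^(2*s+k) := by ring
    have step1 : lamTerm d b k α s ≤
        (cmax^D * ((((2*s+k):ℕ):ℝ)+1)^D * r^(2*s+k)) *
          (2^k * ((s+k).factorial : ℝ) / (s.factorial : ℝ)) *
          ((2 * (s.factorial : ℝ)) / (((s+k).factorial : ℝ)/2)) := by
      unfold lamTerm
      apply mul_le_mul
      · apply mul_le_mul hpc hfr (by positivity) (by positivity)
      · exact hgr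
      · exact le_of_lt (div_pos (hGnumpos s) (hGdenpos s k))
      · positivity
    have step2 : (cmax^D * ((((2*s+k):ℕ):ℝ)+1)^D * r^(2*s+k)) *
          (2^k * ((s+k).factorial : ℝ) / (s.factorial : ℝ)) *
          ((2 * (s.factorial : ℝ)) / (((s+k).factorial : ℝ)/2))
        = 4 * cmax^D * 2^k * (((((2*s+k):ℕ):ℝ)+1)^D * r^(2*s+k)) := by
      field_simp
      ring
    have hxm : ((((2*s+k):ℕ):ℝ)+1)^D * r^(2*s+k) ≤ M * (r^s * x^k) := by
      have hr_eq : r^(2*s+k) = x^(2*s+k) * x^(2*s+k) := by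
        rw [← hxx, ← pow_mul, ← pow_add]
        congr 1
        ring
      rw [hr_eq]
      calc ((((2*s+k):ℕ):ℝ)+1)^D * (x^(2*s+k) * x^(2*s+k))
          = (((((2*s+k):ℕ):ℝ)+1)^D * x^(2*s+k)) * x^(2*s+k) := by ring
        _ ≤ M * x^(2*s+k) := mul_le_mul_of_nonneg_right (hM (2*s+k)) (by positivity)
        _ = M * (r^s * x^k) := by
            rw [pow_add, ← hxx, ← pow_mul]
    calc lamTerm d b k α s ≤ 4 * cmax^D * 2^k * (((((2*s+k):ℕ):ℝ)+1)^D * r^(2*s+k)) := by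
          rw [← step2]; exact step1
      _ ≤ 4 * cmax^D * 2^k * (M * (r^s * x^k)) := by
          apply mul_le_mul_of_nonneg_left hxm (by positivity)
      _ = Cup * (2*x)^k * r^s := by
          rw [hCup, mul_pow]
          ring
  have hgeo : ∀ k : ℕ, Summable (fun s : ℕ => Cup * (2*x)^k * r^s) :=
    fun k => (summable_geometric_of_lt_one (le_of_lt hr0) hr1).mul_left _
  have hsum : ∀ k α, α ≤ D → Summable (lamTerm d b k α) :=
    fun k α hα => Summable.of_nonneg_of_le (hTnn k α) (hTub k α hα) (hgeo k)
  have htsub : ∀ k α, α ≤ D → ∑' s, lamTerm d b k α s ≤ Cup * (2*x)^k * (1-r)⁻¹ := by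
    intro k α hα
    calc ∑' s, lamTerm d b k α s ≤ ∑' s : ℕ, Cup * (2*x)^k * r^s :=
          Summable.tsum_le_tsum (hTub k α hα) (hsum k α hα) (hgeo k)
      _ = Cup * (2*x)^k * (1-r)⁻¹ := by
          rw [tsum_mul_left, tsum_geometric_of_lt_one (le_of_lt hr0) hr1]
  have htsnn : ∀ k α, 0 ≤ ∑' s, lamTerm d b k α s :=
    fun k α => tsum_nonneg (hTnn k α)
  -- the nonnegativity claim
  have claim_nn : ∀ k α, α ≤ D → 0 ≤ lamCoef d b k α := by
    intro k α _
    rw [lamCoef_eq]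
    exact mul_nonneg (by positivity) (htsnn k α)
  -- the upper bound claim
  set Λ := P * Cup * (1-r)⁻¹ / 2 with hΛdef
  have hΛ0 : 0 < Λ := by
    have : (0:ℝ) < (1-r)⁻¹ := by
      apply inv_pos.2; linarith
    positivity
  have claim_ub : ∀ k α, α ≤ D → lamCoef d b k α ≤ Λ * x^k := by
    intro k α hα
    rw [lamCoef_eq]
    have h2k : (0:ℝ) < 2^(k+1) := by positivity
    calc P / 2^(k+1) * ∑' s, lamTerm d b k α s
        ≤ P / 2^(k+1) * (Cup * (2*x)^k * (1-r)⁻¹) := by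
          apply mul_le_mul_of_nonneg_left (htsub k α hα) (by positivity)
      _ = Λ * x^k := by
          rw [hΛdef, mul_pow, pow_succ]
          have h2kne : (2:ℝ)^k ≠ 0 := by positivity
          have h1r : (1:ℝ) - r ≠ 0 := by intro h; linarith
          field_simp
  -- lower bound for α ≥ 1
  set cmin := min c₂ 1 with hcmin
  have hcmin0 : 0 < cmin := lt_min hc2 one_pos
  have hcmin1 : cmin ≤ 1 := min_le_right _ _
  have hsqrtpi : (1:ℝ) ≤ Real.Gamma (1/2) := by
    rw [Real.Gamma_one_half_eq]
    rw [show (1:ℝ) = Real.sqrt 1 by rw [Real.sqrt_one]]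
    exact Real.sqrt_le_sqrt (by linarith [Real.pi_gt_three])
  have hdpow : (0:ℝ) < (d:ℝ)^d := by positivity
  have hT0 : ∀ k α, 1 ≤ α → α ≤ D →
      cmin^D * r^k / ((d:ℝ)^d * M₂ * 2^k) ≤ lamTerm d b k α 0 := by
    intro k α hα1 hαD
    have e1 : 2*0+k = k := by ring
    have hkf : (0:ℝ) < (k.factorial : ℝ) := by exact_mod_cast k.factorial_pos
    have hkdf : (0:ℝ) < ((k+d).factorial : ℝ) := by exact_mod_cast (k+d).factorial_pos
    have hpc : cmin^D * r^k ≤ powCoef b α k := by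
      have h1 := powCoef_ge hr0 (fun m => (hb m).1) (le_of_lt hc2) hb0 hα1 k
      have h2 : cmin^D ≤ c₂^α :=
        le_trans (pow_le_pow_of_le_one (le_of_lt hcmin0) hcmin1 hαD)
          (pow_le_pow_left₀ (le_of_lt hcmin0) (min_le_left _ _) α)
      calc cmin^D * r^k ≤ c₂^α * r^k :=
            mul_le_mul_of_nonneg_right h2 (by positivity)
        _ ≤ powCoef b α k := h1
    have hGk : Real.Gamma ((0:ℝ) + (k:ℝ) + (d:ℝ)/2) ≤ ((k+d).factorial : ℝ) := by
      have harg : (0:ℝ) + (k:ℝ) + (d:ℝ)/2 = (k:ℝ) + (d:ℝ)/2 := by ring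
      rw [harg]
      exact myGamma_nat_half_upper hd k
    have hgl : (1:ℝ) / ((k+d).factorial : ℝ)
        ≤ Real.Gamma ((0:ℝ)+1/2) / Real.Gamma ((0:ℝ)+(k:ℝ)+(d:ℝ)/2) := by
      have h0 : Real.Gamma ((0:ℝ)+1/2) = Real.Gamma (1/2) := by norm_num
      rw [h0]
      exact div_le_div₀ (by linarith) hsqrtpi (hGdenpos0 k) hGk
    have hfd : ((k+d).factorial : ℝ) ≤ (k.factorial : ℝ) * ((d:ℝ)^d * M₂ * 2^k) := by
      have h1 : ((k+d).factorial : ℝ) ≤ (k.factorial : ℝ) * ((k:ℝ)+(d:ℝ))^d := by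
        have := fact_add_le k d
        calc ((k+d).factorial : ℝ) ≤ ((k.factorial * (k+d)^d : ℕ) : ℝ) := by exact_mod_cast this
          _ = (k.factorial : ℝ) * ((k:ℝ)+(d:ℝ))^d := by push_cast; ring
      have h2 : ((k:ℝ)+(d:ℝ))^d ≤ ((d:ℝ) * ((k:ℝ)+1))^d := by
        apply pow_le_pow_left₀ (by positivity)
        have hk0 : (0:ℝ) ≤ (k:ℝ) := Nat.cast_nonneg k
        nlinarith
      have h3 : ((d:ℝ) * ((k:ℝ)+1))^d = (d:ℝ)^d * ((k:ℝ)+1)^d := mul_pow _ _ _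
      have h4 : ((k:ℝ)+1)^d ≤ M₂ * 2^k := by
        have := hM₂ k
        have h2k : (0:ℝ) < 2^k := by positivity
        have hh : ((k:ℝ)+1)^d * (1/2)^k * 2^k ≤ M₂ * 2^k :=
          mul_le_mul_of_nonneg_right this (le_of_lt h2k)
        calc ((k:ℝ)+1)^d = ((k:ℝ)+1)^d * (1/2)^k * 2^k := by
              rw [div_pow, one_pow, mul_assoc]
              field_simp
          _ ≤ M₂ * 2^k := hh
      calc ((k+d).factorial : ℝ) ≤ (k.factorial : ℝ) * ((k:ℝ)+(d:ℝ))^d := h1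
        _ ≤ (k.factorial : ℝ) * ((d:ℝ) * ((k:ℝ)+1))^d :=
            mul_le_mul_of_nonneg_left h2 (le_of_lt hkf)
        _ = (k.factorial : ℝ) * ((d:ℝ)^d * ((k:ℝ)+1)^d) := by rw [h3]
        _ ≤ (k.factorial : ℝ) * ((d:ℝ)^d * (M₂ * 2^k)) := by
            apply mul_le_mul_of_nonneg_left _ (le_of_lt hkf)
            exact mul_le_mul_of_nonneg_left h4 (le_of_lt hdpow)
        _ = (k.factorial : ℝ) * ((d:ℝ)^d * M₂ * 2^k) := by ring
    have hratio : (1:ℝ) / ((d:ℝ)^d * M₂ * 2^k) ≤ (k.factorial : ℝ) / ((k+d).factorial : ℝ) := by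
      have hX : (0:ℝ) < (d:ℝ)^d * M₂ * 2^k := by positivity
      have h5 : (k.factorial : ℝ) / ((k.factorial : ℝ) * ((d:ℝ)^d * M₂ * 2^k))
          ≤ (k.factorial : ℝ) / ((k+d).factorial : ℝ) :=
        div_le_div_of_nonneg_left (le_of_lt hkf) hkdf hfd
      calc (1:ℝ) / ((d:ℝ)^d * M₂ * 2^k)
          = (k.factorial : ℝ) / ((k.factorial : ℝ) * ((d:ℝ)^d * M₂ * 2^k)) := by
            field_simp
        _ ≤ (k.factorial : ℝ) / ((k+d).factorial : ℝ) := h5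
    have heval : lamTerm d b k α 0 = powCoef b α k * (k.factorial : ℝ) *
        (Real.Gamma ((0:ℝ)+1/2) / Real.Gamma ((0:ℝ)+(k:ℝ)+(d:ℝ)/2)) := by
      unfold lamTerm
      norm_num
    rw [heval]
    have hXpos : (0:ℝ) < (d:ℝ)^d * M₂ * 2^k := by positivity
    have hGrnn : (0:ℝ) ≤ Real.Gamma ((0:ℝ)+1/2) / Real.Gamma ((0:ℝ)+(k:ℝ)+(d:ℝ)/2) :=
      le_of_lt (div_pos (Real.Gamma_pos_of_pos (by norm_num)) (hGdenpos0 k))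
    calc cmin^D * r^k / ((d:ℝ)^d * M₂ * 2^k)
        = (cmin^D * r^k) * ((1:ℝ) / ((d:ℝ)^d * M₂ * 2^k)) := by ring
      _ ≤ (cmin^D * r^k) * ((k.factorial : ℝ) / ((k+d).factorial : ℝ)) := by
          apply mul_le_mul_of_nonneg_left hratio (by positivity)
      _ = ((cmin^D * r^k) * (k.factorial : ℝ)) * ((1:ℝ) / ((k+d).factorial : ℝ)) := by
          ring
      _ ≤ (powCoef b α k * (k.factorial : ℝ)) *
            (Real.Gamma ((0:ℝ)+1/2) / Real.Gamma ((0:ℝ)+(k:ℝ)+(d:ℝ)/2)) := by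
          apply mul_le_mul
          · exact mul_le_mul_of_nonneg_right hpc (le_of_lt hkf)
          · exact hgl
          · positivity
          · have := powCoef_nonneg hb0 α k
            positivity
  -- lower bound claims assembled
  set μ₁ := P * cmin^D / (2 * ((d:ℝ)^d * M₂)) with hμ₁def
  have hμ₁0 : 0 < μ₁ := by positivity
  have claim_lb : ∀ k α, 1 ≤ α → α ≤ D → μ₁ * (r/4)^k ≤ lamCoef d b k α := by
    intro k α hα1 hαD
    rw [lamCoef_eq]
    have h1 : lamTerm d b k α 0 ≤ ∑' s, lamTerm d b k α s :=
      Summable.le_tsum (hsum k α hαD) 0 (fun j _ => hTnn k α j)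
    have h2 : cmin^D * r^k / ((d:ℝ)^d * M₂ * 2^k) ≤ ∑' s, lamTerm d b k α s :=
      le_trans (hT0 k α hα1 hαD) h1
    have hid : μ₁ * (r/4)^k = P / 2^(k+1) * (cmin^D * r^k / ((d:ℝ)^d * M₂ * 2^k)) := by
      rw [hμ₁def, div_pow, show (4:ℝ) = 2*2 by norm_num, mul_pow, pow_succ]
      have h2kne : (2:ℝ)^k ≠ 0 := by positivity
      have hdM : ((d:ℝ)^d * M₂) ≠ 0 := by positivity
      field_simp
    rw [hid]
    exact mul_le_mul_of_nonneg_left h2 (by positivity)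
  -- lamCoef d b 0 0 lower bound
  set μ₂ := P / (2 * ((d.factorial : ℕ) : ℝ)) with hμ₂def
  have hdf : (0:ℝ) < ((d.factorial : ℕ) : ℝ) := by exact_mod_cast d.factorial_pos
  have hμ₂0 : 0 < μ₂ := by positivity
  have hsqrtpi' : (1:ℝ) ≤ Real.Gamma (((0:ℕ):ℝ) + 1/2) := by
    rw [show ((0:ℕ):ℝ) + 1/2 = 1/2 by norm_num]
    exact hsqrtpi
  have claim00 : μ₂ ≤ lamCoef d b 0 0 := by
    rw [lamCoef_eq]
    have hGk : Real.Gamma (((0:ℕ):ℝ) + ((0:ℕ):ℝ) + (d:ℝ)/2) ≤ ((d.factorial : ℕ):ℝ) := by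
      have h := myGamma_nat_half_upper hd 0
      have e : ((0:ℕ):ℝ) + ((0:ℕ):ℝ) + (d:ℝ)/2 = ((0:ℕ):ℝ) + (d:ℝ)/2 := by push_cast; ring
      rw [e]
      simpa using h
    have hGpos := hGdenpos 0 0
    have hdiv : (1:ℝ)/((d.factorial : ℕ):ℝ) ≤
        Real.Gamma (((0:ℕ):ℝ)+1/2) / Real.Gamma (((0:ℕ):ℝ)+((0:ℕ):ℝ)+(d:ℝ)/2) :=
      div_le_div₀ (by linarith) hsqrtpi' hGpos hGk
    have hterm0 : (1:ℝ) / ((d.factorial : ℕ) : ℝ) ≤ lamTerm d b 0 0 0 := by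
      refine le_trans hdiv (le_of_eq ?_)
      unfold lamTerm
      rw [powCoef_zero_eq]
      norm_num
    have h2 : (1:ℝ) / ((d.factorial : ℕ) : ℝ) ≤ ∑' s, lamTerm d b 0 0 s :=
      le_trans hterm0 (Summable.le_tsum (hsum 0 0 (Nat.zero_le D)) 0 (fun j _ => hTnn 0 0 j))
    calc μ₂ = P / 2^(0+1) * ((1:ℝ) / ((d.factorial : ℕ) : ℝ)) := by
          rw [hμ₂def]
          norm_num
          ring
      _ ≤ P / 2^(0+1) * ∑' s, lamTerm d b 0 0 s :=
          mul_le_mul_of_nonneg_left h2 (by positivity)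
  -- lamCoef with α = 0 and k ≥ 1 vanishes
  have claim_z0 : ∀ k, 1 ≤ k → lamCoef d b k 0 = 0 := by
    intro k hk
    rw [lamCoef_eq]
    have hz : ∀ s, lamTerm d b k 0 s = 0 := by
      intro s
      unfold lamTerm
      rw [powCoef_zero_eq, if_neg (by omega), zero_mul, zero_mul]
    have ht : ∑' s, lamTerm d b k 0 s = 0 := by
      rw [tsum_congr hz, tsum_zero]
    rw [ht, mul_zero]
  refine ⟨Λ, min μ₁ μ₂, hΛ0, lt_min hμ₁0 hμ₂0, claim_nn, claim_ub, ?_, le_trans (min_le_right _ _) claim00, claim_z0⟩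
  intro k α hα1 hαD
  refine le_trans ?_ (claim_lb k α hα1 hαD)
  apply mul_le_mul_of_nonneg_right (min_le_left _ _) (by positivity)

end lam

lemma tuple_le {n q : ℕ} {t : Fin n → ℕ} (ht : t ∈ Finset.Nat.antidiagonalTuple n q)
    (i : Fin n) : t i ≤ q := by
  rw [Finset.Nat.mem_antidiagonalTuple] at ht
  calc t i ≤ ∑ j, t j := Finset.single_le_sum (fun j _ => Nat.zero_le _) (Finset.mem_univ i)
    _ = q := ht

lemma multinomial_le_factorial {n q : ℕ} {t : Fin n → ℕ}
    (ht : t ∈ Finset.Nat.antidiagonalTuple n q) :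
    Nat.multinomial Finset.univ t ≤ q.factorial := by
  rw [Finset.Nat.mem_antidiagonalTuple] at ht
  have hspec := Nat.multinomial_spec Finset.univ t
  rw [ht] at hspec
  exact Nat.le_of_dvd q.factorial_pos ⟨∏ i, (t i).factorial, by rw [← hspec]; ring⟩

lemma one_le_multinomial {n : ℕ} {t : Fin n → ℕ} :
    1 ≤ Nat.multinomial Finset.univ t := Nat.multinomial_pos _ _

lemma card_filter_lt (n m : ℕ) (h : m ≤ n) :
    ((Finset.univ : Finset (Fin n)).filter (fun j : Fin n => (j:ℕ) < m)).card = m := by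
  have key : ((Finset.univ : Finset (Fin n)).filter (fun j : Fin n => (j:ℕ) < m)).card
      = (Finset.range m).card := by
    apply Finset.card_bij' (i := fun (j : Fin n) (_ : j ∈ (Finset.univ : Finset (Fin n)).filter (fun j : Fin n => (j:ℕ) < m)) => (j:ℕ))
      (j := fun x hx => (⟨x, lt_of_lt_of_le (Finset.mem_range.mp hx) h⟩ : Fin n))
    case hi =>
      intro x hx
      simp only [Finset.mem_filter, Finset.mem_univ, true_and] at hx
      exact Finset.mem_range.mpr hx
    case hj =>
      intro a ha
      simp only [Finset.mem_filter, Finset.mem_univ, true_and]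
      exact Finset.mem_range.mp ha
    case left_inv =>
      intro x hx
      exact Fin.ext rfl
    case right_inv =>
      intro a ha
      rfl
  rw [key, Finset.card_range]

section mu

variable {d n : ℕ} {b a : ℕ → ℝ} {D : ℕ} {Λ μ₀ ρ σ : ℝ}

lemma mu_eq (haD : ∀ q : ℕ, D < q → a q = 0) (k : Fin n → ℕ) :
    muCoef d n b a k = ∑ q ∈ Finset.range (D+1), a q *
      ∑ t ∈ Finset.Nat.antidiagonalTuple n q,
        (Nat.multinomial Finset.univ t : ℝ) * ∏ i, lamCoef d b (k i) (t i) := by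
  apply tsum_eq_sum
  intro q hq
  rw [Finset.mem_range] at hq
  rw [haD q (by omega), zero_mul]

lemma S_nonneg (hlamnn : ∀ k α, α ≤ D → 0 ≤ lamCoef d b k α) (k : Fin n → ℕ)
    {q : ℕ} (hq : q ≤ D) :
    0 ≤ ∑ t ∈ Finset.Nat.antidiagonalTuple n q,
      (Nat.multinomial Finset.univ t : ℝ) * ∏ i, lamCoef d b (k i) (t i) := by
  apply Finset.sum_nonneg
  intro t ht
  apply mul_nonneg (by positivity)
  exact Finset.prod_nonneg fun i _ => hlamnn _ _ (le_trans (tuple_le ht i) hq)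

lemma prod_lam_nonneg (hlamnn : ∀ k α, α ≤ D → 0 ≤ lamCoef d b k α) (k : Fin n → ℕ)
    {q : ℕ} (hq : q ≤ D) {t : Fin n → ℕ} (ht : t ∈ Finset.Nat.antidiagonalTuple n q) :
    0 ≤ ∏ i, lamCoef d b (k i) (t i) :=
  Finset.prod_nonneg fun i _ => hlamnn _ _ (le_trans (tuple_le ht i) hq)

lemma mu_upper (hn : 1 ≤ n)
    (hlamnn : ∀ k α, α ≤ D → 0 ≤ lamCoef d b k α)
    (hlamub : ∀ k α, α ≤ D → lamCoef d b k α ≤ Λ * ρ^k)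
    (hΛ1 : 1 ≤ Λ) (hρ0 : 0 < ρ) (hρ1 : ρ ≤ 1)
    (ha0 : ∀ q, 0 ≤ a q) (haD : ∀ q : ℕ, D < q → a q = 0)
    (k : Fin n → ℕ) (i : Fin n) :
    muCoef d n b a k ≤
      (∑ q ∈ Finset.range (D+1), a q) * ((D:ℝ)+1)^n * (D.factorial : ℝ) * Λ^n * ρ^(k i) := by
  have hΛ0 : (0:ℝ) < Λ := lt_of_lt_of_le one_pos hΛ1
  have hprod : ∀ q ≤ D, ∀ t ∈ Finset.Nat.antidiagonalTuple n q,
      ∏ j, lamCoef d b (k j) (t j) ≤ Λ^n * ρ^(k i) := by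
    intro q hq t ht
    have hsplit : lamCoef d b (k i) (t i) * ∏ j ∈ Finset.univ.erase i, lamCoef d b (k j) (t j)
        = ∏ j, lamCoef d b (k j) (t j) :=
      Finset.mul_prod_erase Finset.univ (fun j => lamCoef d b (k j) (t j)) (Finset.mem_univ i)
    rw [← hsplit]
    have hrest : ∏ j ∈ Finset.univ.erase i, lamCoef d b (k j) (t j) ≤ Λ^(n-1) := by
      calc ∏ j ∈ Finset.univ.erase i, lamCoef d b (k j) (t j)
          ≤ ∏ _j ∈ Finset.univ.erase i, Λ := by
            apply Finset.prod_le_prod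
            · intro j _
              exact hlamnn _ _ (le_trans (tuple_le ht j) hq)
            · intro j _
              refine le_trans (hlamub (k j) (t j) (le_trans (tuple_le ht j) hq)) ?_
              calc Λ * ρ^(k j) ≤ Λ * 1 := by
                    apply mul_le_mul_of_nonneg_left _ (le_of_lt hΛ0)
                    exact pow_le_one₀ (le_of_lt hρ0) hρ1
                _ = Λ := mul_one Λ
        _ = Λ^(n-1) := by
            rw [Finset.prod_const, Finset.card_erase_of_mem (Finset.mem_univ i),
              Finset.card_univ, Fintype.card_fin]
    have hi : lamCoef d b (k i) (t i) ≤ Λ * ρ^(k i) :=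
      hlamub (k i) (t i) (le_trans (tuple_le ht i) hq)
    calc lamCoef d b (k i) (t i) * ∏ j ∈ Finset.univ.erase i, lamCoef d b (k j) (t j)
        ≤ (Λ * ρ^(k i)) * Λ^(n-1) := by
          apply mul_le_mul hi hrest
          · exact Finset.prod_nonneg fun j _ => hlamnn _ _ (le_trans (tuple_le ht j) hq)
          · positivity
      _ = Λ^n * ρ^(k i) := by
          have hpow : Λ^n = Λ^(n-1) * Λ := by
            rw [← pow_succ]
            congr 1
            omega
          rw [hpow]
          ring
  have hS : ∀ q ≤ D, ∑ t ∈ Finset.Nat.antidiagonalTuple n q,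
      (Nat.multinomial Finset.univ t : ℝ) * ∏ j, lamCoef d b (k j) (t j)
      ≤ ((D:ℝ)+1)^n * (D.factorial : ℝ) * Λ^n * ρ^(k i) := by
    intro q hq
    have hbound : ∀ t ∈ Finset.Nat.antidiagonalTuple n q,
        (Nat.multinomial Finset.univ t : ℝ) * ∏ j, lamCoef d b (k j) (t j)
        ≤ (D.factorial : ℝ) * (Λ^n * ρ^(k i)) := by
      intro t ht
      apply mul_le_mul
      · have h1 := multinomial_le_factorial ht
        have h2 : q.factorial ≤ D.factorial := Nat.factorial_le hq
        exact_mod_cast le_trans h1 h2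
      · exact hprod q hq t ht
      · exact prod_lam_nonneg hlamnn k hq ht
      · positivity
    calc ∑ t ∈ Finset.Nat.antidiagonalTuple n q,
        (Nat.multinomial Finset.univ t : ℝ) * ∏ j, lamCoef d b (k j) (t j)
        ≤ (Finset.Nat.antidiagonalTuple n q).card • ((D.factorial : ℝ) * (Λ^n * ρ^(k i))) :=
          Finset.sum_le_card_nsmul _ _ _ hbound
      _ = ((Finset.Nat.antidiagonalTuple n q).card : ℝ) * ((D.factorial : ℝ) * (Λ^n * ρ^(k i))) :=
          nsmul_eq_mul _ _
      _ ≤ ((D:ℝ)+1)^n * ((D.factorial : ℝ) * (Λ^n * ρ^(k i))) := by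
          apply mul_le_mul_of_nonneg_right _ (by positivity)
          have h1 := card_antidiagonalTuple_le n q
          have h2 : (q+1)^n ≤ (D+1)^n := Nat.pow_le_pow_left (by omega) _
          calc ((Finset.Nat.antidiagonalTuple n q).card : ℝ) ≤ (((q+1)^n : ℕ) : ℝ) := by
                exact_mod_cast h1
            _ ≤ (((D+1)^n : ℕ) : ℝ) := by exact_mod_cast h2
            _ = ((D:ℝ)+1)^n := by push_cast; ring
      _ = ((D:ℝ)+1)^n * (D.factorial : ℝ) * Λ^n * ρ^(k i) := by ring
  rw [mu_eq haD]
  calc ∑ q ∈ Finset.range (D+1), a q * ∑ t ∈ Finset.Nat.antidiagonalTuple n q,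
        (Nat.multinomial Finset.univ t : ℝ) * ∏ j, lamCoef d b (k j) (t j)
      ≤ ∑ q ∈ Finset.range (D+1), a q * (((D:ℝ)+1)^n * (D.factorial : ℝ) * Λ^n * ρ^(k i)) := by
        apply Finset.sum_le_sum
        intro q hq
        rw [Finset.mem_range] at hq
        exact mul_le_mul_of_nonneg_left (hS q (by omega)) (ha0 q)
    _ = (∑ q ∈ Finset.range (D+1), a q) * ((D:ℝ)+1)^n * (D.factorial : ℝ) * Λ^n * ρ^(k i) := by
        rw [← Finset.sum_mul]
        ring

lemma mu_vanish (hlamz : ∀ k, 1 ≤ k → lamCoef d b k 0 = 0)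
    (haD : ∀ q : ℕ, D < q → a q = 0) (k : Fin n → ℕ)
    (hsupp : D < (Finset.univ.filter (fun j => k j ≠ 0)).card) :
    muCoef d n b a k = 0 := by
  rw [mu_eq haD]
  apply Finset.sum_eq_zero
  intro q hq
  rw [Finset.mem_range] at hq
  have hS : ∑ t ∈ Finset.Nat.antidiagonalTuple n q,
      (Nat.multinomial Finset.univ t : ℝ) * ∏ j, lamCoef d b (k j) (t j) = 0 := by
    apply Finset.sum_eq_zero
    intro t ht
    have hsum : ∑ j, t j = q := Finset.Nat.mem_antidiagonalTuple.mp ht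
    set A := Finset.univ.filter (fun j : Fin n => t j ≠ 0) with hA
    have hcardA : A.card ≤ q := by
      have h1 : A.card = ∑ j ∈ A, 1 := by rw [Finset.sum_const, smul_eq_mul, mul_one]
      have h2 : ∑ j ∈ A, 1 ≤ ∑ j ∈ A, t j := by
        apply Finset.sum_le_sum
        intro j hj
        rw [hA, Finset.mem_filter] at hj
        omega
      have h3 : ∑ j ∈ A, t j ≤ ∑ j, t j :=
        Finset.sum_le_sum_of_subset (Finset.filter_subset _ _)
      omega
    have hnotsub : ¬ (Finset.univ.filter (fun j => k j ≠ 0)) ⊆ A := by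
      intro hsub
      have := Finset.card_le_card hsub
      omega
    obtain ⟨j, hjB, hjA⟩ := Finset.not_subset.mp hnotsub
    rw [Finset.mem_filter] at hjB
    have htj : t j = 0 := by
      by_contra h
      exact hjA (by rw [hA, Finset.mem_filter]; exact ⟨Finset.mem_univ _, h⟩)
    have hprod : ∏ i, lamCoef d b (k i) (t i) = 0 := by
      apply Finset.prod_eq_zero (Finset.mem_univ j)
      rw [htj]
      exact hlamz (k j) (by omega)
    rw [hprod, mul_zero]
  rw [hS, mul_zero]

lemma mu_lower (hn : 1 ≤ n) (hD : 1 ≤ D)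
    (hlamnn : ∀ k α, α ≤ D → 0 ≤ lamCoef d b k α)
    (hlamlb : ∀ k α, 1 ≤ α → α ≤ D → μ₀ * σ^k ≤ lamCoef d b k α)
    (hlam00 : μ₀ ≤ lamCoef d b 0 0)
    (hμ₀ : 0 < μ₀) (hσ0 : 0 < σ)
    (ha0 : ∀ q, 0 ≤ a q) (haD : ∀ q : ℕ, D < q → a q = 0)
    (k : Fin n → ℕ) (hk : ∀ j : Fin n, ¬((j:ℕ) < min D n) → k j = 0) :
    a D * (μ₀^n * σ^(∑ j, k j)) ≤ muCoef d n b a k := by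
  set dstar := min D n with hdstar
  have hds1 : 1 ≤ dstar := by omega
  have hdsn : dstar ≤ n := by omega
  have hdsD : dstar ≤ D := by omega
  obtain ⟨t₀, ht₀⟩ : ∃ t₀ : Fin n → ℕ, ∀ j : Fin n, t₀ j = if (j:ℕ) = 0 then D - (dstar - 1)
      else if (j:ℕ) < dstar then 1 else 0 := ⟨_, fun j => rfl⟩
  set A := Finset.univ.filter (fun j : Fin n => (j:ℕ) < dstar) with hAdef
  have hcardA : A.card = dstar := card_filter_lt n dstar hdsn
  set z : Fin n := ⟨0, by omega⟩ with hz
  have hz0 : (z:ℕ) = 0 := rfl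
  have hzA : z ∈ A := by
    rw [hAdef, Finset.mem_filter]
    exact ⟨Finset.mem_univ _, by show (0:ℕ) < dstar; omega⟩
  have hsum_t₀ : ∑ j, t₀ j = D := by
    have h1 : ∑ j ∈ A, t₀ j = ∑ j, t₀ j := by
      apply Finset.sum_subset (Finset.subset_univ A)
      intro j _ hj
      rw [hAdef, Finset.mem_filter] at hj
      push_neg at hj
      have hjlt : ¬ ((j:ℕ) < dstar) := fun hc => by
        have := hj (Finset.mem_univ j); omega
      have hjne : (j:ℕ) ≠ 0 := fun hc => hjlt (by omega)
      rw [ht₀ j, if_neg hjne, if_neg hjlt]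
    have h2 : t₀ z + ∑ j ∈ A.erase z, t₀ j = ∑ j ∈ A, t₀ j :=
      Finset.add_sum_erase A t₀ hzA
    have h3 : t₀ z = D - (dstar - 1) := by
      rw [ht₀ z, if_pos hz0]
    have h4 : ∑ j ∈ A.erase z, t₀ j = dstar - 1 := by
      have hval : ∀ j ∈ A.erase z, t₀ j = 1 := by
        intro j hj
        rw [Finset.mem_erase, hAdef, Finset.mem_filter] at hj
        have hjne : (j:ℕ) ≠ 0 := by
          intro hc
          exact hj.1 (Fin.ext (by omega))
        rw [ht₀ j, if_neg hjne, if_pos hj.2.2]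
      rw [Finset.sum_congr rfl hval, Finset.sum_const, smul_eq_mul, mul_one,
        Finset.card_erase_of_mem hzA, hcardA]
    omega
  have hmem : t₀ ∈ Finset.Nat.antidiagonalTuple n D :=
    Finset.Nat.mem_antidiagonalTuple.mpr hsum_t₀
  -- the product lower bound
  have hprod : μ₀^n * σ^(∑ j, k j) ≤ ∏ j, lamCoef d b (k j) (t₀ j) := by
    have hfac : ∀ j : Fin n, μ₀ * σ^(k j) ≤ lamCoef d b (k j) (t₀ j) := by
      intro j
      by_cases hj : (j:ℕ) < dstar
      · have ht1 : 1 ≤ t₀ j := by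
          rw [ht₀ j]
          by_cases h0 : (j:ℕ) = 0
          · rw [if_pos h0]; omega
          · rw [if_neg h0, if_pos hj]
        have ht2 : t₀ j ≤ D := by
          rw [ht₀ j]
          by_cases h0 : (j:ℕ) = 0
          · rw [if_pos h0]; omega
          · rw [if_neg h0, if_pos hj]; omega
        exact hlamlb (k j) (t₀ j) ht1 ht2
      · have hk0 : k j = 0 := hk j hj
        have ht0 : t₀ j = 0 := by
          have hjne : (j:ℕ) ≠ 0 := by
            intro hc
            exact hj (by omega)
          rw [ht₀ j, if_neg hjne, if_neg hj]
        rw [hk0, ht0, pow_zero, mul_one]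
        exact hlam00
    calc μ₀^n * σ^(∑ j, k j) = ∏ j : Fin n, (μ₀ * σ^(k j)) := by
          rw [Finset.prod_mul_distrib, Finset.prod_const, Finset.card_univ, Fintype.card_fin,
            Finset.prod_pow_eq_pow_sum]
      _ ≤ ∏ j, lamCoef d b (k j) (t₀ j) :=
          Finset.prod_le_prod (fun j _ => by positivity) (fun j _ => hfac j)
  -- assemble
  rw [mu_eq haD]
  have hterm : a D * (μ₀^n * σ^(∑ j, k j)) ≤ a D *
      ∑ t ∈ Finset.Nat.antidiagonalTuple n D,
        (Nat.multinomial Finset.univ t : ℝ) * ∏ j, lamCoef d b (k j) (t j) := by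
    apply mul_le_mul_of_nonneg_left _ (ha0 D)
    have hsingle : (Nat.multinomial Finset.univ t₀ : ℝ) * ∏ j, lamCoef d b (k j) (t₀ j)
        ≤ ∑ t ∈ Finset.Nat.antidiagonalTuple n D,
          (Nat.multinomial Finset.univ t : ℝ) * ∏ j, lamCoef d b (k j) (t j) := by
      apply Finset.single_le_sum _ hmem
      intro t ht
      exact mul_nonneg (by positivity) (prod_lam_nonneg hlamnn k (le_refl D) ht)
    refine le_trans ?_ hsingle
    have hm1 : (1:ℝ) ≤ (Nat.multinomial Finset.univ t₀ : ℝ) := by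
      exact_mod_cast one_le_multinomial
    calc μ₀^n * σ^(∑ j, k j) = 1 * (μ₀^n * σ^(∑ j, k j)) := (one_mul _).symm
      _ ≤ (Nat.multinomial Finset.univ t₀ : ℝ) * ∏ j, lamCoef d b (k j) (t₀ j) := by
          apply mul_le_mul hm1 hprod (by positivity)
          linarith
  refine le_trans hterm ?_
  apply Finset.single_le_sum (f := fun q => a q *
    ∑ t ∈ Finset.Nat.antidiagonalTuple n q,
      (Nat.multinomial Finset.univ t : ℝ) * ∏ j, lamCoef d b (k j) (t j))
    (fun q hq => ?_) (Finset.mem_range.mpr (by omega))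
  rw [Finset.mem_range] at hq
  exact mul_nonneg (ha0 q) (S_nonneg hlamnn k (by omega))

end mu

def pairMap (n : ℕ) (f : Fin n → ℕ × ℕ) : (Fin n → ℕ) × (Fin n → ℕ) :=
  (fun i => (f i).1, fun i => (f i).2)

lemma pairMap_injective (n : ℕ) : Function.Injective (pairMap n) := by
  intro f g h
  funext i
  have h1 := congrFun (congrArg Prod.fst h) i
  have h2 := congrFun (congrArg Prod.snd h) i
  exact Prod.ext h1 h2

def OP (d K : ℕ) : Finset (ℕ × ℕ) :=
  (Finset.range (K+1)).biUnion (fun kk => {kk} ×ˢ Finset.Icc 1 (alphaDim d kk))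

lemma mem_OP {d K : ℕ} {p : ℕ × ℕ} :
    p ∈ OP d K ↔ p.1 ≤ K ∧ 1 ≤ p.2 ∧ p.2 ≤ alphaDim d p.1 := by
  unfold OP
  simp only [Finset.mem_biUnion, Finset.mem_range, Finset.mem_product, Finset.mem_singleton,
    Finset.mem_Icc]
  constructor
  · rintro ⟨kk, hkk, h1, h2⟩
    subst h1
    exact ⟨by omega, h2⟩
  · rintro ⟨h1, h2⟩
    exact ⟨p.1, by omega, rfl, h2⟩

lemma card_OP (d K : ℕ) : (OP d K).card = ∑ kk ∈ Finset.range (K+1), alphaDim d kk := by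
  unfold OP
  rw [Finset.card_biUnion]
  · apply Finset.sum_congr rfl
    intro kk _
    rw [Finset.card_product, Finset.card_singleton, Nat.card_Icc]
    omega
  · intro x _ y _ hxy
    rw [Function.onFun_apply, Finset.disjoint_left]
    intro p hp hp'
    rw [Finset.mem_product, Finset.mem_singleton] at hp hp'
    exact hxy (hp.1 ▸ hp'.1 ▸ rfl)

lemma base_mem_OP {d K : ℕ} : ((0:ℕ),(1:ℕ)) ∈ OP d K := by
  rw [mem_OP]
  refine ⟨Nat.zero_le _, le_refl 1, ?_⟩
  rw [alphaDim_zero]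

lemma one_le_card_OP {d K : ℕ} : 1 ≤ (OP d K).card :=
  Finset.card_pos.mpr ⟨_, base_mem_OP⟩

lemma prod_ite_card {n : ℕ} (S : Finset (Fin n)) (N : ℕ) :
    ∏ i : Fin n, (if i ∈ S then N else 1) = N ^ S.card := by
  rw [Finset.prod_ite_mem Finset.univ S (fun _ => N), Finset.univ_inter, Finset.prod_const]

lemma count_upper {d : ℕ} (n K m : ℕ) (E : Set ((Fin n → ℕ) × (Fin n → ℕ)))
    (hE : ∀ p ∈ E, (∀ i : Fin n, p.1 i ≤ K ∧ 1 ≤ p.2 i ∧ p.2 i ≤ alphaDim d (p.1 i)) ∧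
      ((Finset.univ.filter (fun j : Fin n => p.1 j ≠ 0)).card ≤ m)) :
    E.Finite ∧ E.ncard ≤ 2^n * (OP d K).card^m := by
  classical
  set FU := (((Finset.univ : Finset (Fin n)).powerset).filter (fun S => S.card ≤ m)).biUnion
    (fun S => (Fintype.piFinset (fun i => if i ∈ S then OP d K else {((0:ℕ),(1:ℕ))})).image
      (pairMap n)) with hFU
  have hsub : E ⊆ ↑FU := by
    intro p hp
    obtain ⟨hbox, hsupp⟩ := hE p hp
    rw [hFU]
    simp only [Finset.coe_biUnion, Set.mem_iUnion, Finset.mem_coe, Finset.mem_image]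
    refine ⟨Finset.univ.filter (fun j : Fin n => p.1 j ≠ 0), ?_, fun i => (p.1 i, p.2 i), ?_, ?_⟩
    · rw [Finset.mem_filter]
      exact ⟨Finset.mem_powerset.mpr (Finset.subset_univ _), hsupp⟩
    · rw [Fintype.mem_piFinset]
      intro i
      by_cases hi : i ∈ Finset.univ.filter (fun j : Fin n => p.1 j ≠ 0)
      · rw [if_pos hi, mem_OP]
        exact hbox i
      · rw [if_neg hi, Finset.mem_singleton]
        rw [Finset.mem_filter] at hi
        push_neg at hi
        have h1 : p.1 i = 0 := hi (Finset.mem_univ i)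
        have h2 : p.2 i = 1 := by
          have := hbox i
          rw [h1, alphaDim_zero] at this
          omega
        rw [h1, h2]
    · unfold pairMap
      exact Prod.ext rfl rfl
  have hfin : E.Finite := Set.Finite.subset FU.finite_toSet hsub
  refine ⟨hfin, ?_⟩
  have h1 : E.ncard ≤ FU.card := by
    rw [← Set.ncard_coe_finset FU]
    exact Set.ncard_le_ncard hsub FU.finite_toSet
  refine le_trans h1 ?_
  have h2 : FU.card ≤ ∑ S ∈ ((Finset.univ : Finset (Fin n)).powerset).filter (fun S => S.card ≤ m),
      ((Fintype.piFinset (fun i => if i ∈ S then OP d K else {((0:ℕ),(1:ℕ))})).image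
        (pairMap n)).card := Finset.card_biUnion_le
  refine le_trans h2 ?_
  have h3 : ∀ S ∈ ((Finset.univ : Finset (Fin n)).powerset).filter (fun S => S.card ≤ m),
      ((Fintype.piFinset (fun i => if i ∈ S then OP d K else {((0:ℕ),(1:ℕ))})).image
        (pairMap n)).card ≤ (OP d K).card^m := by
    intro S hS
    rw [Finset.mem_filter] at hS
    calc ((Fintype.piFinset (fun i => if i ∈ S then OP d K else {((0:ℕ),(1:ℕ))})).image
          (pairMap n)).card
        ≤ (Fintype.piFinset (fun i => if i ∈ S then OP d K else {((0:ℕ),(1:ℕ))})).card :=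
          Finset.card_image_le
      _ = ∏ i : Fin n, (if i ∈ S then OP d K else {((0:ℕ),(1:ℕ))}).card :=
          Fintype.card_piFinset _
      _ = ∏ i : Fin n, (if i ∈ S then (OP d K).card else 1) := by
          apply Finset.prod_congr rfl
          intro i _
          by_cases hi : i ∈ S
          · rw [if_pos hi, if_pos hi]
          · rw [if_neg hi, if_neg hi, Finset.card_singleton]
      _ = (OP d K).card ^ S.card := prod_ite_card S _
      _ ≤ (OP d K).card ^ m := Nat.pow_le_pow_right one_le_card_OP hS.2
  calc ∑ S ∈ ((Finset.univ : Finset (Fin n)).powerset).filter (fun S => S.card ≤ m),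
      ((Fintype.piFinset (fun i => if i ∈ S then OP d K else {((0:ℕ),(1:ℕ))})).image
        (pairMap n)).card
      ≤ ∑ _S ∈ ((Finset.univ : Finset (Fin n)).powerset).filter (fun S => S.card ≤ m),
        (OP d K).card^m := Finset.sum_le_sum h3
    _ = (((Finset.univ : Finset (Fin n)).powerset).filter (fun S => S.card ≤ m)).card *
        (OP d K).card^m := by rw [Finset.sum_const, smul_eq_mul]
    _ ≤ 2^n * (OP d K).card^m := by
        apply Nat.mul_le_mul_right
        calc (((Finset.univ : Finset (Fin n)).powerset).filter (fun S => S.card ≤ m)).card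
            ≤ ((Finset.univ : Finset (Fin n)).powerset).card :=
              Finset.card_le_card (Finset.filter_subset _ _)
          _ = 2^n := by rw [Finset.card_powerset, Finset.card_univ, Fintype.card_fin]

lemma count_lower {d : ℕ} (n K m : ℕ) (hm : m ≤ n) (E : Set ((Fin n → ℕ) × (Fin n → ℕ)))
    (hEfin : E.Finite)
    (hE : ∀ p : (Fin n → ℕ) × (Fin n → ℕ),
      (∀ i : Fin n, (¬((i:ℕ) < m) → p.1 i = 0 ∧ p.2 i = 1) ∧
        (((i:ℕ) < m) → p.1 i ≤ K ∧ 1 ≤ p.2 i ∧ p.2 i ≤ alphaDim d (p.1 i))) → p ∈ E) :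
    (OP d K).card ^ m ≤ E.ncard := by
  classical
  set FG := (Fintype.piFinset (fun i : Fin n =>
    if (i:ℕ) < m then OP d K else {((0:ℕ),(1:ℕ))})).image (pairMap n) with hFG
  have hcard : FG.card = (OP d K).card ^ m := by
    rw [hFG, Finset.card_image_of_injective _ (pairMap_injective n), Fintype.card_piFinset]
    calc ∏ i : Fin n, (if (i:ℕ) < m then OP d K else {((0:ℕ),(1:ℕ))}).card
        = ∏ i : Fin n, (if i ∈ Finset.univ.filter (fun j : Fin n => (j:ℕ) < m)
            then (OP d K).card else 1) := by
          apply Finset.prod_congr rfl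
          intro i _
          by_cases hi : (i:ℕ) < m
          · rw [if_pos hi, if_pos (by rw [Finset.mem_filter]; exact ⟨Finset.mem_univ _, hi⟩)]
          · rw [if_neg hi, if_neg (by
                simp only [Finset.mem_filter, Finset.mem_univ, true_and]
                exact hi), Finset.card_singleton]
      _ = (OP d K).card ^ (Finset.univ.filter (fun j : Fin n => (j:ℕ) < m)).card :=
          prod_ite_card _ _
      _ = (OP d K).card ^ m := by rw [card_filter_lt n m hm]
  have hsub : ↑FG ⊆ E := by
    intro p hp
    rw [hFG] at hp
    simp only [Finset.coe_image, Set.mem_image, Finset.mem_coe] at hp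
    obtain ⟨f, hf, rfl⟩ := hp
    rw [Fintype.mem_piFinset] at hf
    apply hE
    intro i
    have hfi := hf i
    constructor
    · intro hi
      rw [if_neg hi, Finset.mem_singleton] at hfi
      unfold pairMap
      simp only
      rw [hfi]
      exact ⟨rfl, rfl⟩
    · intro hi
      rw [if_pos hi, mem_OP] at hfi
      exact hfi
  calc (OP d K).card ^ m = FG.card := hcard.symm
    _ = (↑FG : Set _).ncard := (Set.ncard_coe_finset FG).symm
    _ ≤ E.ncard := Set.ncard_le_ncard hsub hEfin


/-- Under the geometric bounds on `b` and with `g` a polynomial of degree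
`D ≥ 1` with nonnegative coefficients, with `d* := min(D, n)`, there exist constants
`C, C', c, c', lam0 > 0` such that for all `0 < λ ≤ lam0` the set `E^λ` is finite and
`c (log(c'/λ))^{(d-1)d*} ≤ |E^λ| ≤ C (log(C'/λ))^{(d-1)d*}`. -/
theorem stmt_5 (d n : ℕ) (hd : 2 ≤ d) (hn : 1 ≤ n)
    (b a : ℕ → ℝ) (r c₁ c₂ : ℝ)
    (hr0 : 0 < r) (hr1 : r < 1) (hc2 : 0 < c₂) (hcc : c₂ ≤ c₁)
    (hconv : ∀ x ∈ Set.Icc (-1 : ℝ) 1, Summable fun m : ℕ => b m * x ^ m)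
    (hb : ∀ m : ℕ, c₂ * r ^ m ≤ b m ∧ b m ≤ c₁ * r ^ m)
    (D : ℕ) (hD : 1 ≤ D) (ha0 : ∀ q : ℕ, 0 ≤ a q)
    (haD : ∀ q : ℕ, D < q → a q = 0) (haDne : a D ≠ 0) :
    ∃ C C' c c' lam0 : ℝ, 0 < C ∧ 0 < C' ∧ 0 < c ∧ 0 < c' ∧ 0 < lam0 ∧
      ∀ lam : ℝ, 0 < lam → lam ≤ lam0 →
        (eigSet d n b a lam).Finite ∧
        c * Real.log (c' / lam) ^ ((d - 1) * min D n) ≤ ((eigSet d n b a lam).ncard : ℝ) ∧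
        ((eigSet d n b a lam).ncard : ℝ) ≤ C * Real.log (C' / lam) ^ ((d - 1) * min D n) := by
  classical
  obtain ⟨Λ, μ₀, hΛ0, hμ₀0, hlamnn, hlamub, hlamlb, hlam00, hlamz⟩ :=
    lam_package hd hr0 hr1 hc2 hcc hb D
  set dstar := min D n with hdstar
  have hds1 : 1 ≤ dstar := by omega
  have hdsn : dstar ≤ n := by omega
  set ρ := Real.sqrt r with hρdef
  have hρ0 : 0 < ρ := Real.sqrt_pos.2 hr0
  have hρ1 : ρ < 1 := by
    rw [hρdef, show (1:ℝ) = Real.sqrt 1 by rw [Real.sqrt_one]]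
    exact Real.sqrt_lt_sqrt (le_of_lt hr0) hr1
  set σ := r/4 with hσdef
  have hσ0 : 0 < σ := by rw [hσdef]; linarith only [hr0]
  have hσ1 : σ < 1 := by rw [hσdef]; linarith only [hr0, hr1]
  set Λ' := max Λ 1 with hΛ'def
  have hΛ'1 : (1:ℝ) ≤ Λ' := le_max_right _ _
  have hΛ'0 : (0:ℝ) < Λ' := lt_of_lt_of_le one_pos hΛ'1
  have hlamub' : ∀ k α, α ≤ D → lamCoef d b k α ≤ Λ' * ρ^k := by
    intro k α hα
    refine le_trans (hlamub k α hα) ?_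
    exact mul_le_mul_of_nonneg_right (le_max_left _ _) (by positivity)
  have haDpos : 0 < a D := lt_of_le_of_ne (ha0 D) (Ne.symm haDne)
  set B := (∑ q ∈ Finset.range (D+1), a q) * ((D:ℝ)+1)^n * (D.factorial : ℝ) * Λ'^n with hBdef
  have hsuma : a D ≤ ∑ q ∈ Finset.range (D+1), a q :=
    Finset.single_le_sum (fun q _ => ha0 q) (Finset.mem_range.mpr (by omega))
  have hB0 : 0 < B := by
    have h1 : 0 < ∑ q ∈ Finset.range (D+1), a q := lt_of_lt_of_le haDpos hsuma
    have h2 : (0:ℝ) < (D.factorial : ℝ) := by exact_mod_cast D.factorial_pos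
    positivity
  set B' := max B 1 with hB'def
  have hB'0 : (0:ℝ) < B' := lt_of_lt_of_le one_pos (le_max_right _ _)
  have hmuub : ∀ (k : Fin n → ℕ) (i : Fin n), muCoef d n b a k ≤ B' * ρ^(k i) := by
    intro k i
    refine le_trans (mu_upper hn hlamnn hlamub' hΛ'1 hρ0 (le_of_lt hρ1) ha0 haD k i) ?_
    exact mul_le_mul_of_nonneg_right (le_max_left _ _) (by positivity)
  set β := a D * μ₀^n with hβdef
  have hβ0 : 0 < β := by positivity
  set β' := min β 1 with hβ'def
  have hβ'0 : 0 < β' := lt_min hβ0 one_pos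
  have hβ'1 : β' ≤ 1 := min_le_right _ _
  -- log constants
  set tρ := -Real.log ρ with htρdef
  have htρ0 : 0 < tρ := by
    rw [htρdef, neg_pos]
    exact Real.log_neg hρ0 hρ1
  set tσ := -Real.log σ with htσdef
  have htσ0 : 0 < tσ := by
    rw [htσdef, neg_pos]
    exact Real.log_neg hσ0 hσ1
  -- final constants
  set e := (d - 1) * dstar with hedef
  set C := (2:ℝ)^n * (2*(d:ℝ)^(d-2))^dstar * (2/tρ)^e with hCdef
  set c := (1/((n:ℝ) * tσ))^e / (((d-1).factorial : ℝ))^dstar with hcdef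
  have hdR : (0:ℝ) < (d:ℝ) := by exact_mod_cast lt_of_lt_of_le two_pos hd
  have hnR : (0:ℝ) < (n:ℝ) := by exact_mod_cast hn
  have hdf : (0:ℝ) < (((d-1).factorial : ℕ) : ℝ) := by exact_mod_cast (d-1).factorial_pos
  have hC0 : 0 < C := by positivity
  have hc0 : 0 < c := by positivity
  refine ⟨C, B', c, β', min (B' * ρ) β', hC0, hB'0, hc0, hβ'0, ?_, ?_⟩
  · exact lt_min (by positivity) hβ'0
  intro lam hlam0 hlam1
  have hlamB : lam ≤ B' * ρ := le_trans hlam1 (min_le_left _ _)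
  have hlamβ : lam ≤ β' := le_trans hlam1 (min_le_right _ _)
  -- the upper-bound K
  set L := Real.log (B'/lam) with hLdef
  have hL1 : tρ ≤ L := by
    rw [hLdef, Real.log_div (ne_of_gt hB'0) (ne_of_gt hlam0), htρdef]
    have h1 : Real.log lam ≤ Real.log (B' * ρ) := Real.log_le_log hlam0 hlamB
    rw [Real.log_mul (ne_of_gt hB'0) (ne_of_gt hρ0)] at h1
    linarith only [h1]
  have hL0 : 0 < L := lt_of_lt_of_le htρ0 hL1
  set Kup := ⌊L / tρ⌋₊ with hKupdef
  -- membership bounds for the upper bound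
  have hup : ∀ p ∈ eigSet d n b a lam, (∀ i : Fin n, p.1 i ≤ Kup ∧ 1 ≤ p.2 i ∧
      p.2 i ≤ alphaDim d (p.1 i)) ∧
      ((Finset.univ.filter (fun j : Fin n => p.1 j ≠ 0)).card ≤ dstar) := by
    intro p hp
    obtain ⟨hl, hmu⟩ := hp
    constructor
    · intro i
      refine ⟨?_, hl i⟩
      have h1 : lam ≤ B' * ρ^(p.1 i) := le_trans hmu (hmuub p.1 i)
      have h2 : Real.log lam ≤ Real.log (B' * ρ^(p.1 i)) := Real.log_le_log hlam0 h1
      rw [Real.log_mul (ne_of_gt hB'0) (by positivity), Real.log_pow] at h2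
      have h3 : (p.1 i : ℝ) * tρ ≤ L := by
        rw [hLdef, Real.log_div (ne_of_gt hB'0) (ne_of_gt hlam0), htρdef]
        have he : (p.1 i : ℝ) * -Real.log ρ = -((p.1 i : ℝ) * Real.log ρ) := by ring
        rw [he]
        linarith only [h2]
      have h4 : (p.1 i : ℝ) ≤ L / tρ := by
        rw [le_div_iff₀ htρ0]
        exact h3
      exact Nat.le_floor h4
    · have hD' : (Finset.univ.filter (fun j : Fin n => p.1 j ≠ 0)).card ≤ D := by
        by_contra hcon
        push_neg at hcon
        have := mu_vanish (n := n) (a := a) hlamz haD p.1 hcon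
        rw [this] at hmu
        linarith only [hmu, hlam0]
      have hn' : (Finset.univ.filter (fun j : Fin n => p.1 j ≠ 0)).card ≤ n := by
        calc (Finset.univ.filter (fun j : Fin n => p.1 j ≠ 0)).card
            ≤ (Finset.univ : Finset (Fin n)).card := Finset.card_filter_le _ _
          _ = n := by rw [Finset.card_univ, Fintype.card_fin]
      omega
  obtain ⟨hfin, hcount⟩ := count_upper (d := d) n Kup dstar (eigSet d n b a lam) hup
  refine ⟨hfin, ?_, ?_⟩
  · -- LOWER BOUND
    set Klo := ⌊Real.log (β'/lam) / ((n:ℝ) * tσ)⌋₊ with hKlodef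
    set L' := Real.log (β'/lam) with hL'def
    have hL'0 : 0 ≤ L' := by
      rw [hL'def]
      apply Real.log_nonneg
      rw [le_div_iff₀ hlam0]
      linarith only [hlamβ]
    have hKlo_le : (Klo : ℝ) ≤ L' / ((n:ℝ) * tσ) := Nat.floor_le (by positivity)
    have hKlo_ge : L' / ((n:ℝ) * tσ) < (Klo : ℝ) + 1 := Nat.lt_floor_add_one _
    -- membership: the box is contained in the eigSet
    have hlow : ∀ p : (Fin n → ℕ) × (Fin n → ℕ),
        (∀ i : Fin n, (¬((i:ℕ) < dstar) → p.1 i = 0 ∧ p.2 i = 1) ∧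
          (((i:ℕ) < dstar) → p.1 i ≤ Klo ∧ 1 ≤ p.2 i ∧ p.2 i ≤ alphaDim d (p.1 i))) →
        p ∈ eigSet d n b a lam := by
      intro p hp
      constructor
      · intro i
        by_cases hi : (i:ℕ) < dstar
        · exact ((hp i).2 hi).2
        · obtain ⟨h1, h2⟩ := (hp i).1 hi
          rw [h1, h2, alphaDim_zero]
          exact ⟨le_refl 1, le_refl 1⟩
      · -- the μ lower bound
        have hsupp : ∀ j : Fin n, ¬((j:ℕ) < dstar) → p.1 j = 0 :=
          fun j hj => ((hp j).1 hj).1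
        have hmu := mu_lower hn hD hlamnn hlamlb hlam00 hμ₀0 hσ0 ha0 haD p.1 hsupp
        have hsum_le : ∑ j, p.1 j ≤ n * Klo := by
          calc ∑ j, p.1 j ≤ ∑ _j : Fin n, Klo := by
                apply Finset.sum_le_sum
                intro j _
                by_cases hj : (j:ℕ) < dstar
                · exact ((hp j).2 hj).1
                · rw [hsupp j hj]; exact Nat.zero_le _
            _ = n * Klo := by
                rw [Finset.sum_const, Finset.card_univ, Fintype.card_fin, smul_eq_mul]
        have hgeom : lam ≤ β' * σ^(n * Klo) := by
          have h1 : (n * Klo : ℝ) * tσ ≤ L' := by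
            have h2 : (Klo : ℝ) * ((n:ℝ) * tσ) ≤ L' := by
              rw [← le_div_iff₀ (by positivity)]
              exact hKlo_le
            calc (n * Klo : ℝ) * tσ = (Klo : ℝ) * ((n:ℝ) * tσ) := by push_cast; ring
              _ ≤ L' := h2
          have h3 : Real.log lam ≤ Real.log (β' * σ^(n * Klo)) := by
            rw [Real.log_mul (ne_of_gt hβ'0) (by positivity), Real.log_pow]
            rw [hL'def, Real.log_div (ne_of_gt hβ'0) (ne_of_gt hlam0), htσdef] at h1
            push_cast at h1 ⊢
            linarith only [h1]
          calc lam = Real.exp (Real.log lam) := (Real.exp_log hlam0).symm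
            _ ≤ Real.exp (Real.log (β' * σ^(n * Klo))) := Real.exp_le_exp.2 h3
            _ = β' * σ^(n * Klo) := Real.exp_log (by positivity)
        calc lam ≤ β' * σ^(n * Klo) := hgeom
          _ ≤ β * σ^(∑ j, p.1 j) := by
              apply mul_le_mul (min_le_left _ _)
                (pow_le_pow_of_le_one (le_of_lt hσ0) (le_of_lt hσ1) hsum_le)
                (by positivity) (le_of_lt hβ0)
          _ = a D * (μ₀^n * σ^(∑ j, p.1 j)) := by rw [hβdef]; ring
          _ ≤ muCoef d n b a p.1 := hmu
    have hcnt := count_lower (d := d) n Klo dstar hdsn (eigSet d n b a lam) hfin hlow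
    -- now convert to the real inequality
    set N0 := (OP d Klo).card with hN0def
    have hN0 : ((Klo+1:ℕ))^(d-1) ≤ N0 * (d-1).factorial := by
      have h1 : (Klo + d - 1).choose (d-1) ≤ N0 := by
        rw [hN0def, card_OP]
        exact sum_alphaDim_ge hd Klo
      have h2 := pow_le_choose_mul_fact Klo (d-1)
      rw [show Klo + (d-1) = Klo + d - 1 by omega] at h2
      calc (Klo+1)^(d-1) ≤ (Klo + d - 1).choose (d-1) * (d-1).factorial := h2
        _ ≤ N0 * (d-1).factorial := Nat.mul_le_mul_right _ h1
    have hN0R : (((Klo:ℝ))+1)^(d-1) / ((d-1).factorial : ℝ) ≤ (N0:ℝ) := by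
      rw [div_le_iff₀ hdf]
      calc (((Klo:ℝ))+1)^(d-1) = (((Klo+1:ℕ))^(d-1) : ℕ) := by push_cast; ring
        _ ≤ ((N0 * (d-1).factorial : ℕ) : ℝ) := by exact_mod_cast hN0
        _ = (N0:ℝ) * ((d-1).factorial : ℝ) := by push_cast; ring
    have hL'up : L' ≤ ((n:ℝ) * tσ) * ((Klo:ℝ)+1) := by
      have h1 := hKlo_ge
      rw [div_lt_iff₀ (by positivity)] at h1
      calc L' ≤ ((Klo:ℝ)+1) * ((n:ℝ)*tσ) := le_of_lt h1
        _ = ((n:ℝ)*tσ) * ((Klo:ℝ)+1) := by ring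
    have hstep1 : (L')^e ≤ (((n:ℝ)*tσ) * ((Klo:ℝ)+1))^e :=
      pow_le_pow_left₀ hL'0 hL'up e
    have hstep2 : c * (L')^e ≤ (((Klo:ℝ)+1))^e / (((d-1).factorial : ℝ))^dstar := by
      rw [hcdef]
      calc (1/((n:ℝ)*tσ))^e / (((d-1).factorial : ℝ))^dstar * (L')^e
          ≤ (1/((n:ℝ)*tσ))^e / (((d-1).factorial : ℝ))^dstar *
            ((((n:ℝ)*tσ) * ((Klo:ℝ)+1))^e) := by
            apply mul_le_mul_of_nonneg_left hstep1 (by positivity)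
        _ = (((Klo:ℝ)+1))^e / (((d-1).factorial : ℝ))^dstar := by
            rw [mul_pow, div_pow, one_pow]
            have h1 : ((n:ℝ)*tσ)^e ≠ 0 := by positivity
            field_simp
    have hstep3 : (((Klo:ℝ)+1))^e / (((d-1).factorial : ℝ))^dstar ≤ ((N0:ℝ))^dstar := by
      rw [hedef, pow_mul, ← div_pow]
      exact pow_le_pow_left₀ (by positivity) hN0R dstar
    have hstep4 : ((N0:ℝ))^dstar ≤ ((eigSet d n b a lam).ncard : ℝ) := by
      exact_mod_cast hcnt
    calc c * Real.log (β'/lam) ^ e ≤ (((Klo:ℝ)+1))^e / (((d-1).factorial : ℝ))^dstar := by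
          rw [← hL'def]; exact hstep2
      _ ≤ ((N0:ℝ))^dstar := hstep3
      _ ≤ ((eigSet d n b a lam).ncard : ℝ) := hstep4
  · -- UPPER BOUND
    set N := (OP d Kup).card with hNdef
    have hNle : (N:ℝ) ≤ 2*(d:ℝ)^(d-2) * ((Kup:ℝ)+1)^(d-1) := by
      have h1 : N ≤ 2*d^(d-2)*(Kup+1)^(d-1) := by
        rw [hNdef, card_OP]
        exact sum_alphaDim_le hd Kup
      calc (N:ℝ) ≤ ((2*d^(d-2)*(Kup+1)^(d-1) : ℕ) : ℝ) := by exact_mod_cast h1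
        _ = 2*(d:ℝ)^(d-2) * ((Kup:ℝ)+1)^(d-1) := by push_cast; ring
    have hcast : ((eigSet d n b a lam).ncard : ℝ) ≤ (2:ℝ)^n * (N:ℝ)^dstar := by
      exact_mod_cast hcount
    have hKup1 : (Kup:ℝ)+1 ≤ (2/tρ)*L := by
      have hfl : (Kup:ℝ) ≤ L/tρ := Nat.floor_le (by positivity)
      have h1 : (1:ℝ) ≤ L/tρ := by
        rw [le_div_iff₀ htρ0]
        linarith only [hL1]
      calc (Kup:ℝ)+1 ≤ L/tρ + L/tρ := by linarith only [hfl, h1]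
        _ = (2/tρ)*L := by ring
    calc ((eigSet d n b a lam).ncard : ℝ) ≤ (2:ℝ)^n * (N:ℝ)^dstar := hcast
      _ ≤ (2:ℝ)^n * ((2*(d:ℝ)^(d-2)) * ((Kup:ℝ)+1)^(d-1))^dstar := by
          apply mul_le_mul_of_nonneg_left _ (by positivity)
          apply pow_le_pow_left₀ (Nat.cast_nonneg N) _ dstar
          calc (N:ℝ) ≤ 2*(d:ℝ)^(d-2) * ((Kup:ℝ)+1)^(d-1) := hNle
            _ = (2*(d:ℝ)^(d-2)) * ((Kup:ℝ)+1)^(d-1) := by ring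
      _ ≤ (2:ℝ)^n * ((2*(d:ℝ)^(d-2)) * ((2/tρ)*L)^(d-1))^dstar := by
          apply mul_le_mul_of_nonneg_left _ (by positivity)
          apply pow_le_pow_left₀ (by positivity) _ dstar
          apply mul_le_mul_of_nonneg_left _ (by positivity)
          exact pow_le_pow_left₀ (by positivity) hKup1 _
      _ = C * L^e := by
          rw [hCdef, hedef]
          rw [mul_pow, mul_pow, ← pow_mul, ← pow_mul]
          ring
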